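/- arXiv:1611.00678 — 9 statements merged into one kernel-verified Lean document; each statement's English description precedes it below -/
import Mathlib

section
/- Let X be a paracompact topological space, Y a real Banach space, and f : X → Y a Baire-1 function. Then there exists a sequence (G_n)_{n=1}^∞ of open strips in X × Y such that ⋂_{n=1}^∞ G_n = gr(f) and for each x ∈ X the diameter of the vertical section G_n(x) tends to 0 as n → ∞. -/
open Filter Topology
open scoped ENNReal NNReal

-- helper: the section is convex
lemma strip_convex {Y : Type*} [NormedAddCommGroup Y] [NormedSpace ℝ Y]
    (c : Y) (a : ℕ → ℝ≥0∞) : Convex ℝ {y : Y | ∃ m, edist y c < a m} := by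
  have key : ∀ (r : ℝ≥0∞) (y₁ y₂ : Y), edist y₁ c < r → edist y₂ c < r →
      ∀ t s : ℝ, 0 ≤ t → 0 ≤ s → t + s = 1 → edist (t • y₁ + s • y₂) c < r := by
    intro r y₁ y₂ h₁ h₂ t s ht hs hts
    rcases eq_or_ne r ⊤ with rfl | hr
    · exact edist_lt_top _ _
    · have hr' : r = ENNReal.ofReal r.toReal := (ENNReal.ofReal_toReal hr).symm
      rw [hr', edist_lt_ofReal] at h₁ h₂ ⊢
      have := convex_ball c r.toReal (Metric.mem_ball.2 h₁) (Metric.mem_ball.2 h₂) ht hs hts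
      exact Metric.mem_ball.1 this
  intro y₁ hy₁ y₂ hy₂ t s ht hs hts
  obtain ⟨m₁, h₁⟩ := hy₁
  obtain ⟨m₂, h₂⟩ := hy₂
  rcases le_total (a m₁) (a m₂) with h | h
  · exact ⟨m₂, key _ _ _ (h₁.trans_le h) h₂ t s ht hs hts⟩
  · exact ⟨m₁, key _ _ _ h₁ (h₂.trans_le h) t s ht hs hts⟩

theorem baire_one_graph_open_strips_aux
    {X Y : Type*} [TopologicalSpace X]
    [NormedAddCommGroup Y] [NormedSpace ℝ Y]
    (f : X → Y) (hf : ∃ g : ℕ → X → Y, (∀ n, Continuous (g n)) ∧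
      ∀ x, Filter.Tendsto (fun n => g n x) Filter.atTop (nhds (f x))) :
    ∃ G : ℕ → Set (X × Y),
      (∀ n, IsOpen (G n)) ∧
      (∀ n, ∀ x : X, Convex ℝ {y : Y | (x, y) ∈ G n}) ∧
      (⋂ n, G n) = {p : X × Y | p.2 = f p.1} ∧
      (∀ x : X,
        Tendsto (fun n => EMetric.diam {y : Y | (x, y) ∈ G n}) atTop (𝓝 0)) := by
  obtain ⟨g, hgc, hgl⟩ := hf
  set G : ℕ → Set (X × Y) := fun n =>
    {p : X × Y | ∃ m : ℕ, edist p.2 (g n p.1) <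
      ((n : ℝ≥0∞) + 1)⁻¹ + edist (g (n + m) p.1) (g n p.1)} with hG
  have hconv : ∀ x, ∀ ε : ℝ≥0∞, 0 < ε → ∃ N, ∀ k ≥ N, edist (g k x) (f x) < ε := by
    intro x ε hε
    exact EMetric.tendsto_atTop.1 (hgl x) ε hε
  refine ⟨G, ?_, ?_, ?_, ?_⟩
  · -- openness
    intro n
    have : G n = ⋃ m : ℕ, {p : X × Y | edist p.2 (g n p.1) <
        ((n : ℝ≥0∞) + 1)⁻¹ + edist (g (n + m) p.1) (g n p.1)} := by
      ext p; simp [hG]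
    rw [this]
    refine isOpen_iUnion fun m => isOpen_lt ?_ ?_
    · exact continuous_snd.edist ((hgc n).comp continuous_fst)
    · exact continuous_const.add
        (((hgc (n + m)).comp continuous_fst).edist ((hgc n).comp continuous_fst))
  · -- convexity of sections
    intro n x
    exact strip_convex (g n x) fun m => ((n : ℝ≥0∞) + 1)⁻¹ + edist (g (n + m) x) (g n x)
  · -- intersection is graph
    ext ⟨x, y⟩
    simp only [Set.mem_iInter, Set.mem_setOf_eq, hG]
    constructor
    · intro h
      have key : ∀ ε : ℝ≥0, 0 < ε → edist y (f x) ≤ ε := by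
        intro ε hε
        have hδ : (0 : ℝ≥0∞) < (ε : ℝ≥0∞) / 4 :=
          ENNReal.div_pos (by exact_mod_cast hε.ne') (by norm_num)
        obtain ⟨N₁, hN₁⟩ := hconv x (ε / 4) hδ
        obtain ⟨n₀, hn₀⟩ := ENNReal.exists_inv_nat_lt (ne_of_gt hδ)
        set n := max N₁ n₀ with hn
        have hinv : ((n : ℝ≥0∞) + 1)⁻¹ < ε / 4 := by
          refine lt_of_le_of_lt ?_ hn₀
          rw [ENNReal.inv_le_inv]
          exact_mod_cast le_trans (le_max_right N₁ n₀) (Nat.le_succ n)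
        obtain ⟨m, hm⟩ := h n
        have h1 : edist (g (n + m) x) (g n x) ≤
            edist (g (n + m) x) (f x) + edist (f x) (g n x) := edist_triangle _ _ _
        have h2 : edist (g (n + m) x) (f x) < ε / 4 :=
          hN₁ (n + m) (le_trans (le_max_left N₁ n₀) (Nat.le_add_right n m))
        have h3 : edist (f x) (g n x) < ε / 4 := by
          rw [edist_comm]; exact hN₁ n (le_max_left N₁ n₀)
        have h4 : edist y (g n x) < ε / 4 + (ε / 4 + ε / 4) :=
          lt_of_lt_of_le hm (le_trans (add_le_add le_rfl h1)
            (add_le_add hinv.le (add_le_add h2.le h3.le)))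
        have h5 : edist y (f x) ≤ edist y (g n x) + edist (g n x) (f x) := edist_triangle _ _ _
        have h6 : edist (g n x) (f x) < ε / 4 := hN₁ n (le_max_left N₁ n₀)
        calc edist y (f x) ≤ edist y (g n x) + edist (g n x) (f x) := h5
          _ ≤ (ε / 4 + (ε / 4 + ε / 4)) + ε / 4 := add_le_add h4.le h6.le
          _ = ε := by
              have : ((ε:ℝ≥0∞) / 4 + ((ε:ℝ≥0∞) / 4 + (ε:ℝ≥0∞) / 4)) + (ε:ℝ≥0∞) / 4
                  = (ε:ℝ≥0∞) / 4 * 4 := by ring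
              rw [this, ENNReal.div_mul_cancel (by norm_num) (by norm_num)]
      have : edist y (f x) ≤ 0 := by
        refine ENNReal.le_of_forall_pos_le_add fun ε hε _ => ?_
        simpa using key ε hε
      exact eq_of_edist_eq_zero (le_antisymm this zero_le)
    · rintro rfl
      intro n
      have hpos : (0 : ℝ≥0∞) < ((n : ℝ≥0∞) + 1)⁻¹ :=
        ENNReal.inv_pos.2 (by simp)
      obtain ⟨N, hN⟩ := hconv x _ hpos
      refine ⟨N, ?_⟩
      have h1 : edist (f x) (g n x) ≤
          edist (f x) (g (n + N) x) + edist (g (n + N) x) (g n x) := edist_triangle _ _ _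
      have h2 : edist (f x) (g (n + N) x) < ((n : ℝ≥0∞) + 1)⁻¹ := by
        rw [edist_comm]; exact hN (n + N) (Nat.le_add_left N n)
      calc edist (f x) (g n x)
          ≤ edist (f x) (g (n + N) x) + edist (g (n + N) x) (g n x) := h1
        _ < ((n : ℝ≥0∞) + 1)⁻¹ + edist (g (n + N) x) (g n x) :=
            ENNReal.add_lt_add_right (edist_lt_top _ _).ne h2
  · -- diameters tend to 0
    intro x
    rw [ENNReal.tendsto_atTop_zero]
    intro ε hε
    obtain ⟨δ, hδ0, hδtop, hδε⟩ : ∃ δ : ℝ≥0∞, 0 < δ ∧ δ < ⊤ ∧ 8 * δ ≤ ε := by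
      rcases eq_or_ne ε ⊤ with rfl | hεtop
      · exact ⟨1, one_pos, ENNReal.one_lt_top, le_top⟩
      · refine ⟨ε / 8, ENNReal.div_pos (ne_of_gt hε) (by norm_num), ?_, ?_⟩
        · exact ENNReal.div_lt_top hεtop (by norm_num)
        · rw [mul_comm, ENNReal.div_mul_cancel (by norm_num) (by norm_num)]
    obtain ⟨N₁, hN₁⟩ := hconv x δ hδ0
    obtain ⟨n₀, hn₀⟩ := ENNReal.exists_inv_nat_lt (ne_of_gt hδ0)
    refine ⟨max N₁ n₀, fun n hn => ?_⟩
    have hinv : ((n : ℝ≥0∞) + 1)⁻¹ ≤ δ := by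
      refine le_trans ?_ hn₀.le
      rw [ENNReal.inv_le_inv]
      exact_mod_cast le_trans (le_trans (le_max_right N₁ n₀) hn) (Nat.le_succ n)
    have hN₁' : N₁ ≤ n := le_trans (le_max_left N₁ n₀) hn
    have hsec : ∀ y ∈ {y : Y | (x, y) ∈ G n}, edist y (g n x) ≤ 3 * δ := by
      rintro y ⟨m, hm⟩
      have h1 : edist (g (n + m) x) (g n x) ≤
          edist (g (n + m) x) (f x) + edist (f x) (g n x) := edist_triangle _ _ _
      have h2 : edist (g (n + m) x) (f x) ≤ δ := (hN₁ (n + m) (le_trans hN₁' (Nat.le_add_right n m))).le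
      have h3 : edist (f x) (g n x) ≤ δ := by rw [edist_comm]; exact (hN₁ n hN₁').le
      calc edist y (g n x)
          ≤ ((n : ℝ≥0∞) + 1)⁻¹ + edist (g (n + m) x) (g n x) := hm.le
        _ ≤ δ + (δ + δ) := add_le_add hinv (le_trans h1 (add_le_add h2 h3))
        _ = 3 * δ := by ring
    calc EMetric.diam {y : Y | (x, y) ∈ G n}
        ≤ 6 * δ := EMetric.diam_le fun y₁ hy₁ y₂ hy₂ => by
          calc edist y₁ y₂ ≤ edist y₁ (g n x) + edist (g n x) y₂ := edist_triangle _ _ _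
            _ ≤ 3 * δ + 3 * δ := add_le_add (hsec y₁ hy₁)
                (by rw [edist_comm]; exact hsec y₂ hy₂)
            _ = 6 * δ := by ring
      _ ≤ 8 * δ := mul_le_mul' (by norm_num) le_rfl
      _ ≤ ε := hδε


/-- A function is Baire-1 if it is the pointwise limit of a sequence of continuous functions. -/
def BaireOne {X Y : Type*} [TopologicalSpace X] [TopologicalSpace Y] (f : X → Y) : Prop :=
  ∃ g : ℕ → X → Y, (∀ n, Continuous (g n)) ∧
    ∀ x, Filter.Tendsto (fun n => g n x) Filter.atTop (nhds (f x))

/-- If `X` is a paracompact topological space, `Y` a real Banach space, and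
`f : X → Y` is Baire-1, then there is a sequence of open strips in `X × Y` whose
intersection is the graph of `f` and whose vertical sections above each `x` have
diameter tending to `0`. -/
theorem baire_one_graph_open_strips
    {X Y : Type*} [TopologicalSpace X] [ParacompactSpace X]
    [NormedAddCommGroup Y] [NormedSpace ℝ Y] [CompleteSpace Y]
    (f : X → Y) (hf : BaireOne f) :
    ∃ G : ℕ → Set (X × Y),
      (∀ n, IsOpen (G n)) ∧
      (∀ n, ∀ x : X, Convex ℝ {y : Y | (x, y) ∈ G n}) ∧
      (⋂ n, G n) = {p : X × Y | p.2 = f p.1} ∧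
      (∀ x : X,
        Tendsto (fun n => EMetric.diam {y : Y | (x, y) ∈ G n}) atTop (𝓝 0)) :=
  baire_one_graph_open_strips_aux f hf
end

section
/- Let X be a topological space, Y a metric space, α a countable ordinal, and f : X → Y a Baire-α function. Then for every open set G ⊆ Y the preimage f⁻¹(G) ⊆ X is a set of additive Borel class α+1 (a Σ_{α+1} set). In other words, every Baire-α function is a Borel-(α+1) mapping. -/
open Filter Topology

/-- The Baire hierarchy: `IsBaireClass 0 f` iff `f` is continuous, and for a (countable)
ordinal `α > 0`, `IsBaireClass α f` iff `f` is the pointwise limit of a sequence of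
functions, the `n`-th of which is of Baire class `β n` for some `β n < α`. -/
inductive IsBaireClass {X Y : Type*} [TopologicalSpace X] [TopologicalSpace Y] :
    Ordinal → (X → Y) → Prop
  | cont (f : X → Y) : Continuous f → IsBaireClass 0 f
  | lim (α : Ordinal) (f : X → Y) (g : ℕ → X → Y) (β : ℕ → Ordinal) :
      0 < α → (∀ n, β n < α) → (∀ n, IsBaireClass (β n) (g n)) →
      (∀ x, Filter.Tendsto (fun n => g n x) Filter.atTop (nhds (f x))) →
      IsBaireClass α f

/-- The additive Borel classes: `IsSigmaClass 1 s` iff `s` is open, and for an ordinal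
`α > 1`, `IsSigmaClass α s` iff `s` is a countable union of sets, the `n`-th of which
is of multiplicative class `β n` (i.e. its complement is of additive class `β n`)
for some `β n < α`. -/
inductive IsSigmaClass {X : Type*} [TopologicalSpace X] : Ordinal → Set X → Prop
  | open_ (s : Set X) : IsOpen s → IsSigmaClass 1 s
  | union (α : Ordinal) (s : ℕ → Set X) (β : ℕ → Ordinal) :
      1 < α → (∀ n, β n < α) → (∀ n, IsSigmaClass (β n) (s n)ᶜ) →
      IsSigmaClass α (⋃ n, s n)

/-- `s` is of multiplicative class `α` iff its complement is of additive class `α`. -/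
def IsPiClass {X : Type*} [TopologicalSpace X] (α : Ordinal) (s : Set X) : Prop :=
  IsSigmaClass α sᶜ

lemma isSigmaClass_empty {X : Type*} [TopologicalSpace X] {γ : Ordinal} (hγ : 1 < γ) :
    IsSigmaClass γ (∅ : Set X) := by
  have h : (∅ : Set X) = ⋃ _ : ℕ, (∅ : Set X) := by simp
  rw [h]
  exact IsSigmaClass.union γ (fun _ => ∅) (fun _ => 1) hγ (fun _ => hγ)
    (fun _ => by simpa using IsSigmaClass.open_ (Set.univ : Set X) isOpen_univ)

lemma isSigmaClass_destruct {X : Type*} [TopologicalSpace X] {γ : Ordinal} {s : Set X}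
    (hγ : 1 < γ) (h : IsSigmaClass γ s) :
    ∃ (t : ℕ → Set X) (δ : ℕ → Ordinal), (∀ k, δ k < γ) ∧ (∀ k, IsSigmaClass (δ k) (t k)ᶜ) ∧
      s = ⋃ k, t k := by
  cases h with
  | open_ s hs => exact absurd hγ (lt_irrefl _)
  | union γ t δ h1 h2 h3 => exact ⟨t, δ, h2, h3, rfl⟩

lemma isSigmaClass_iUnion {X : Type*} [TopologicalSpace X] {α : Ordinal} (hα : 1 < α)
    (s : ℕ → Set X) (β : ℕ → Ordinal) (hβ1 : ∀ n, 1 < β n) (hβα : ∀ n, β n ≤ α)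
    (h : ∀ n, IsSigmaClass (β n) (s n)) : IsSigmaClass α (⋃ n, s n) := by
  choose t δ hδ ht hst using fun n => isSigmaClass_destruct (hβ1 n) (h n)
  have key : (⋃ n, s n) = ⋃ j : ℕ, t (Nat.unpair j).1 (Nat.unpair j).2 := by
    ext x
    simp only [Set.mem_iUnion]
    constructor
    · rintro ⟨n, hx⟩
      rw [hst n] at hx
      obtain ⟨k, hk⟩ := Set.mem_iUnion.1 hx
      exact ⟨Nat.pair n k, by simpa [Nat.unpair_pair] using hk⟩
    · rintro ⟨j, hj⟩
      exact ⟨(Nat.unpair j).1, by rw [hst]; exact Set.mem_iUnion.2 ⟨_, hj⟩⟩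
  rw [key]
  exact IsSigmaClass.union α _ (fun j => δ (Nat.unpair j).1 (Nat.unpair j).2) hα
    (fun j => lt_of_lt_of_le (hδ _ _) (hβα _)) (fun j => ht _ _)

lemma isBaireClass_mono {X Y : Type*} [TopologicalSpace X] [TopologicalSpace Y]
    {β γ : Ordinal} (h : β < γ) {f : X → Y} (hf : IsBaireClass β f) : IsBaireClass γ f :=
  IsBaireClass.lim γ f (fun _ => f) (fun _ => β) (lt_of_le_of_lt (zero_le (a := β)) h)
    (fun _ => h) (fun _ => hf) (fun _ => tendsto_const_nhds)

/-- Every Baire-`α` function from a topological space to a metric space is a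
Borel-`(α+1)` mapping: preimages of open sets are of additive class `α + 1`. -/
theorem preimage_isSigmaClass_succ_of_isBaireClass
    {X Y : Type*} [TopologicalSpace X] [MetricSpace Y]
    (α : Ordinal) (hα : α.card ≤ Cardinal.aleph0)
    (f : X → Y) (hf : IsBaireClass α f)
    (G : Set Y) (hG : IsOpen G) :
    IsSigmaClass (α + 1) (f ⁻¹' G) := by
  clear hα
  have h2 : (1 : Ordinal) < 1 + 1 := by
    rw [Ordinal.add_one_eq_succ]; exact Order.lt_succ 1
  induction α using Ordinal.induction generalizing f G with
  | h α IH =>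
  cases hf with
  | cont f hc =>
    rw [zero_add]
    exact IsSigmaClass.open_ _ (hG.preimage hc)
  | lim α f g β hpos hβ hg htend =>
    set F : ℕ → Set Y := fun m => {y | ∀ z ∈ Gᶜ, 1 / ((m : ℝ) + 1) ≤ dist y z} with hF
    have hposm : ∀ m : ℕ, (0 : ℝ) < 1 / ((m : ℝ) + 1) := fun m => by positivity
    have hFc : ∀ m, IsClosed (F m) := by
      intro m
      have : F m = ⋂ z ∈ Gᶜ, {y | 1 / ((m : ℝ) + 1) ≤ dist y z} := by
        ext y; simp [hF]
      rw [this]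
      exact isClosed_biInter fun z _ =>
        isClosed_le continuous_const (Continuous.dist continuous_id continuous_const)
    have hFG : ∀ m, F m ⊆ G := by
      intro m y hy
      by_contra hyG
      have h := hy y hyG
      rw [dist_self] at h
      linarith [hposm m]
    set T : ℕ → ℕ → ℕ → Set X :=
      fun m N n => if N ≤ n then g n ⁻¹' F m else Set.univ with hT
    set S : ℕ → ℕ → Set X := fun m N => ⋂ n, T m N n with hSdef
    have hS : ∀ m N x, x ∈ S m N ↔ ∀ n, N ≤ n → g n x ∈ F m := by
      intro m N x
      simp only [hSdef, hT, Set.mem_iInter]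
      constructor
      · intro h n hn; have := h n; rwa [if_pos hn] at this
      · intro h n
        by_cases hn : N ≤ n
        · rw [if_pos hn]; exact h n hn
        · rw [if_neg hn]; trivial
    have hkey : f ⁻¹' G = ⋃ j : ℕ, S (Nat.unpair j).1 (Nat.unpair j).2 := by
      ext x
      simp only [Set.mem_preimage, Set.mem_iUnion]
      constructor
      · intro hx
        obtain ⟨ε, hε, hball⟩ := Metric.isOpen_iff.1 hG (f x) hx
        obtain ⟨m, hm⟩ := exists_nat_one_div_lt (show (0 : ℝ) < ε / 2 by linarith)
        obtain ⟨N, hN⟩ := Metric.tendsto_atTop.mp (htend x) _ (hposm m)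
        refine ⟨Nat.pair m N, ?_⟩
        simp only [Nat.unpair_pair]
        refine (hS m N x).2 ?_
        intro n hn z hz
        have h1 : ε ≤ dist (f x) z := by
          by_contra hlt
          push_neg at hlt
          exact hz (hball (by rwa [Metric.mem_ball, dist_comm]))
        have h2' := hN n hn
        have t := dist_triangle (f x) (g n x) z
        have hc : dist (f x) (g n x) = dist (g n x) (f x) := dist_comm _ _
        have hm' : 1 / ((m : ℝ) + 1) < ε / 2 := hm
        linarith
      · rintro ⟨j, hj⟩
        rw [hS] at hj
        refine hFG (Nat.unpair j).1 ?_
        apply (hFc _).mem_of_tendsto (htend x)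
        filter_upwards [Filter.eventually_ge_atTop (Nat.unpair j).2] with n hn
        exact hj n hn
    rw [hkey]
    rcases eq_or_lt_of_le (Order.one_le_iff_pos.mpr hpos) with h1 | h1
    · -- α = 1
      subst h1
      have hgc : ∀ n, Continuous (g n) := by
        intro n
        have hb := hg n
        have hβn : β n = 0 := Ordinal.lt_one_iff_zero.mp (hβ n)
        rw [hβn] at hb
        cases hb with
        | cont _ h => exact h
        | lim _ _ _ _ h0 _ _ _ => exact absurd h0 (lt_irrefl 0)
      have hSc : ∀ m N, IsClosed (S m N) := by
        intro m N
        apply isClosed_iInter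
        intro n
        by_cases hn : N ≤ n
        · simp only [hT, if_pos hn]; exact (hFc m).preimage (hgc n)
        · simp only [hT, if_neg hn]; exact isClosed_univ
      exact IsSigmaClass.union _ _ (fun _ => 1) h2 (fun _ => h2)
        (fun j => IsSigmaClass.open_ _ (hSc _ _).isOpen_compl)
    · -- 1 < α
      have hg' : ∀ n, IsBaireClass (1 ⊔ β n) (g n) := by
        intro n
        rcases lt_or_eq_of_le (le_sup_right : β n ≤ 1 ⊔ β n) with h | h
        · exact isBaireClass_mono h (hg n)
        · rw [← h]; exact hg n
      have hβ' : ∀ n, 1 ⊔ β n < α := fun n => sup_lt_iff.mpr ⟨h1, hβ n⟩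
      have hSpi : ∀ m N, IsSigmaClass α (S m N)ᶜ := by
        intro m N
        have hcompl : (S m N)ᶜ = ⋃ n, (T m N n)ᶜ := by
          simp [hSdef, Set.compl_iInter]
        rw [hcompl]
        apply isSigmaClass_iUnion h1 _ (fun n => if N ≤ n then (1 ⊔ β n) + 1 else 1 + 1)
        · intro n
          by_cases hn : N ≤ n
          · rw [if_pos hn]
            exact lt_of_lt_of_le h2 (add_le_add_left le_sup_left 1)
          · rw [if_neg hn]; exact h2
        · intro n
          by_cases hn : N ≤ n
          · rw [if_pos hn, Ordinal.add_one_eq_succ]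
            exact Order.succ_le_of_lt (hβ' n)
          · rw [if_neg hn, Ordinal.add_one_eq_succ]
            exact Order.succ_le_of_lt h1
        · intro n
          by_cases hn : N ≤ n
          · have hIH := IH _ (hβ' n) (g n) (hg' n) (F m)ᶜ (hFc m).isOpen_compl
            rw [if_pos hn]
            simpa [hT, if_pos hn, Set.preimage_compl] using hIH
          · rw [if_neg hn]
            have : (T m N n)ᶜ = (∅ : Set X) := by simp [hT, if_neg hn]
            rw [this]
            exact isSigmaClass_empty h2
      have hlt : α < α + 1 := by
        rw [Ordinal.add_one_eq_succ]; exact Order.lt_succ α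
      have h1' : (1 : Ordinal) < α + 1 := lt_trans h1 hlt
      exact IsSigmaClass.union _ _ (fun _ => α) h1' (fun _ => hlt) (fun j => hSpi _ _)
end

section
/- Let X be a topological space, Y a metric space, and f : X → Y a Baire-1 function. Then for every open set G ⊆ Y the preimage f⁻¹(G) is an Fσ subset of X, i.e., a countable union of closed sets. -/
open Filter Topology
open scoped ENNReal

/-- For a Baire-1 function from a topological space to a metric space, the
preimage of every open set is an Fσ set, i.e. a countable union of closed sets. -/
theorem preimage_isFSigma_of_baireOne
    {X Y : Type*} [TopologicalSpace X] [MetricSpace Y]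
    (f : X → Y) (hf : BaireOne f) (G : Set Y) (hG : IsOpen G) :
    ∃ F : ℕ → Set X, (∀ n, IsClosed (F n)) ∧ f ⁻¹' G = ⋃ n, F n := by
  obtain ⟨g, hgc, hgt⟩ := hf
  refine ⟨fun m => ⋂ n ∈ Set.Ici m.unpair.2,
      {x | ((m.unpair.1 : ℝ≥0∞) + 1)⁻¹ ≤ EMetric.infEdist (g n x) Gᶜ}, ?_, ?_⟩
  · intro m
    refine isClosed_biInter fun n _ => isClosed_le continuous_const ?_
    exact EMetric.continuous_infEdist.comp (hgc n)
  · have key : ∀ y : Y, y ∈ G ↔ 0 < EMetric.infEdist y Gᶜ := by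
      intro y
      show y ∈ G ↔ 0 < Metric.infEDist y Gᶜ
      rw [EMetric.infEdist_pos_iff_notMem_closure, hG.isClosed_compl.closure_eq,
        Set.notMem_compl_iff]
    ext x
    simp only [Set.mem_preimage, Set.mem_iUnion, Set.mem_iInter, Set.mem_setOf_eq,
      Set.mem_Ici]
    have htend : Tendsto (fun n => EMetric.infEdist (g n x) Gᶜ) atTop
        (nhds (EMetric.infEdist (f x) Gᶜ)) :=
      (EMetric.continuous_infEdist.tendsto _).comp (hgt x)
    constructor
    · intro hx
      have hpos : 0 < EMetric.infEdist (f x) Gᶜ := (key _).1 hx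
      obtain ⟨k, hk⟩ := ENNReal.exists_inv_nat_lt hpos.ne'
      have hk' : ((k : ℝ≥0∞) + 1)⁻¹ < EMetric.infEdist (f x) Gᶜ :=
        lt_of_le_of_lt (by
          apply ENNReal.inv_le_inv.mpr
          exact le_self_add) hk
      have hev : ∀ᶠ n in atTop, ((k : ℝ≥0∞) + 1)⁻¹ ≤ EMetric.infEdist (g n x) Gᶜ :=
        (htend.eventually_const_le hk')
      obtain ⟨N, hN⟩ := hev.exists_forall_of_atTop
      refine ⟨Nat.pair k N, ?_⟩
      simpa [Nat.unpair_pair] using fun n hn => hN n hn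
    · rintro ⟨m, hm⟩
      have hle : ((m.unpair.1 : ℝ≥0∞) + 1)⁻¹ ≤ EMetric.infEdist (f x) Gᶜ :=
        ge_of_tendsto htend (eventually_atTop.2 ⟨m.unpair.2, hm⟩)
      exact (key _).2 (lt_of_lt_of_le (ENNReal.inv_pos.mpr (by simp)) hle)
end

section
/- Let X be a topological space, Y a metric space, and f : X → Y a Baire-2 function. Then for every open set G ⊆ Y the preimage f⁻¹(G) is a countable union of Gδ subsets of X. -/
open Filter Topology
open scoped ENNReal

/-- A function is Baire-2 if it is the pointwise limit of a sequence of Baire-1 functions. -/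
def BaireTwo {X Y : Type*} [TopologicalSpace X] [TopologicalSpace Y] (f : X → Y) : Prop :=
  ∃ g : ℕ → X → Y, (∀ n, BaireOne (g n)) ∧
    ∀ x, Filter.Tendsto (fun n => g n x) Filter.atTop (nhds (f x))

/-- For a Baire-1 function into a metric space, the preimage of a closed set is Gδ. -/
lemma isGδ_preimage_closed_of_baireOne
    {X Y : Type*} [TopologicalSpace X] [MetricSpace Y]
    {g : X → Y} (hg : BaireOne g) {C : Set Y} (hC : IsClosed C) :
    IsGδ (g ⁻¹' C) := by
  obtain ⟨h, hcont, hlim⟩ := hg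
  have key : g ⁻¹' C =
      ⋂ j : ℕ, ⋃ n ∈ Set.Ici j, h n ⁻¹' {y | EMetric.infEdist y C < 1 / (j + 1)} := by
    ext x
    simp only [Set.mem_preimage, Set.mem_iInter, Set.mem_iUnion, Set.mem_Ici,
      Set.mem_setOf_eq, exists_prop]
    constructor
    · intro hx j
      have hεpos : (0 : ℝ≥0∞) < 1 / (j + 1) := by
        simp [ENNReal.div_pos_iff]
      obtain ⟨N, hN⟩ := EMetric.tendsto_atTop.mp (hlim x) _ hεpos
      refine ⟨max j N, le_max_left _ _, ?_⟩
      calc EMetric.infEdist (h (max j N) x) C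
          ≤ EMetric.infEdist (g x) C + edist (h (max j N) x) (g x) :=
            EMetric.infEdist_le_infEdist_add_edist
        _ = edist (h (max j N) x) (g x) := by
            rw [show EMetric.infEdist (g x) C = 0 from (EMetric.mem_iff_infEdist_zero_of_closed hC).mp hx, zero_add]
        _ < 1 / (j + 1) := hN _ (le_max_right _ _)
    · intro hx
      rw [EMetric.mem_iff_infEdist_zero_of_closed hC]
      refine le_antisymm ?_ zero_le
      refine ENNReal.le_of_forall_pos_le_add fun ε hε _ => ?_
      rw [zero_add]
      have hε2 : (0 : ℝ≥0∞) < ε / 2 :=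
        ENNReal.div_pos (by exact_mod_cast hε.ne') (by norm_num)
      obtain ⟨N, hN⟩ := EMetric.tendsto_atTop.mp (hlim x) _ hε2
      obtain ⟨m, hm⟩ := ENNReal.exists_inv_nat_lt hε2.ne'
      obtain ⟨n, hnj, hn⟩ := hx (max N m)
      have h1 : (1 : ℝ≥0∞) / (max N m + 1) ≤ (m : ℝ≥0∞)⁻¹ := by
        rw [one_div]
        apply ENNReal.inv_le_inv.mpr
        exact_mod_cast le_trans (Nat.cast_le.mpr (le_max_right N m)) (by
          exact_mod_cast Nat.le_succ (max N m))
      calc EMetric.infEdist (g x) C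
          ≤ EMetric.infEdist (h n x) C + edist (g x) (h n x) := by
            exact EMetric.infEdist_le_infEdist_add_edist
        _ ≤ 1 / (max N m + 1) + ε / 2 := by
            refine add_le_add hn.le ?_
            rw [edist_comm]
            exact (hN n (le_trans (le_max_left N m) hnj)).le
        _ ≤ ε / 2 + ε / 2 := add_le_add (h1.trans hm.le) le_rfl
        _ = ε := ENNReal.add_halves _
  rw [key]
  refine .iInter fun j => ?_
  refine IsOpen.isGδ ?_
  refine isOpen_biUnion fun n _ => ?_
  exact isOpen_Iio.preimage (EMetric.continuous_infEdist.comp (hcont n))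

/-- For a Baire-2 function from a topological space to a metric space, the
preimage of every open set is a countable union of Gδ sets. -/
theorem preimage_unionGdelta_of_baireTwo
    {X Y : Type*} [TopologicalSpace X] [MetricSpace Y]
    (f : X → Y) (hf : BaireTwo f) (G : Set Y) (hG : IsOpen G) :
    ∃ S : ℕ → Set X, (∀ n, IsGδ (S n)) ∧ f ⁻¹' G = ⋃ n, S n := by
  obtain ⟨g, hg1, hglim⟩ := hf
  -- closed approximating sets
  set C : ℕ → Set Y := fun k => {y | 1 / ((k : ℝ≥0∞) + 1) ≤ EMetric.infEdist y Gᶜ} with hCdef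
  have hCclosed : ∀ k, IsClosed (C k) := fun k =>
    isClosed_le continuous_const EMetric.continuous_infEdist
  set T : ℕ × ℕ → Set X := fun p => ⋂ m ∈ Set.Ici p.2, g m ⁻¹' C p.1 with hTdef
  have hTgδ : ∀ p, IsGδ (T p) := by
    intro p
    exact IsGδ.biInter (Set.to_countable _) fun m _ =>
      isGδ_preimage_closed_of_baireOne (hg1 m) (hCclosed p.1)
  have key : f ⁻¹' G = ⋃ p, T p := by
    ext x
    simp only [Set.mem_preimage, Set.mem_iUnion, hTdef, Set.mem_iInter, Set.mem_Ici,
      Set.mem_preimage, hCdef, Set.mem_setOf_eq]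
    constructor
    · intro hx
      have hGc : IsClosed Gᶜ := hG.isClosed_compl
      have hnot : f x ∉ Gᶜ := fun h => h hx
      have hpos : EMetric.infEdist (f x) Gᶜ ≠ 0 := by
        intro h0
        exact hnot ((EMetric.mem_iff_infEdist_zero_of_closed hGc).mpr h0)
      have hhalf : EMetric.infEdist (f x) Gᶜ / 2 ≠ 0 :=
        ENNReal.div_ne_zero.mpr ⟨hpos, by norm_num⟩
      obtain ⟨k, hk⟩ := ENNReal.exists_inv_nat_lt hhalf
      -- so 2/(k+1) ≤ infEdist (f x) Gᶜ
      have hk2 : 1 / ((k : ℝ≥0∞) + 1) + 1 / ((k : ℝ≥0∞) + 1) ≤ EMetric.infEdist (f x) Gᶜ := by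
        have h1 : (1 : ℝ≥0∞) / (k + 1) ≤ (k : ℝ≥0∞)⁻¹ := by
          rw [one_div]
          exact ENNReal.inv_le_inv.mpr (le_add_of_nonneg_right zero_le)
        have h2 : (k : ℝ≥0∞)⁻¹ + (k : ℝ≥0∞)⁻¹ ≤ EMetric.infEdist (f x) Gᶜ := by
          have := add_le_add hk.le hk.le
          rwa [ENNReal.add_halves] at this
        exact le_trans (add_le_add h1 h1) h2
      have hεpos : (0 : ℝ≥0∞) < 1 / ((k : ℝ≥0∞) + 1) :=
        ENNReal.div_pos one_ne_zero (by
          exact_mod_cast (ENNReal.add_lt_top.mpr ⟨ENNReal.natCast_lt_top k, ENNReal.one_lt_top⟩).ne)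
      obtain ⟨N, hN⟩ := EMetric.tendsto_atTop.mp (hglim x) _ hεpos
      refine ⟨(k, N), fun m hm => ?_⟩
      have h3 : EMetric.infEdist (f x) Gᶜ ≤
          EMetric.infEdist (g m x) Gᶜ + 1 / ((k : ℝ≥0∞) + 1) := by
        calc EMetric.infEdist (f x) Gᶜ
            ≤ EMetric.infEdist (g m x) Gᶜ + edist (f x) (g m x) :=
              EMetric.infEdist_le_infEdist_add_edist
          _ ≤ EMetric.infEdist (g m x) Gᶜ + 1 / ((k : ℝ≥0∞) + 1) := by
              refine add_le_add le_rfl ?_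
              rw [edist_comm]
              exact (hN m hm).le
      have h4 := le_trans hk2 h3
      have hfin : (1 : ℝ≥0∞) / ((k : ℝ≥0∞) + 1) ≠ ⊤ :=
        (ENNReal.div_lt_top ENNReal.one_ne_top (by simp)).ne
      exact (ENNReal.add_le_add_iff_right hfin).mp h4
    · rintro ⟨⟨k, N⟩, hkN⟩
      by_contra hx
      have hGc : IsClosed Gᶜ := hG.isClosed_compl
      have hmem : f x ∈ Gᶜ := hx
      have h0 : EMetric.infEdist (f x) Gᶜ = 0 :=
        (EMetric.mem_iff_infEdist_zero_of_closed hGc).mp hmem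
      have htend : Filter.Tendsto (fun m => EMetric.infEdist (g m x) Gᶜ) Filter.atTop
          (nhds (EMetric.infEdist (f x) Gᶜ)) :=
        (EMetric.continuous_infEdist.tendsto _).comp (hglim x)
      have hge : 1 / ((k : ℝ≥0∞) + 1) ≤ EMetric.infEdist (f x) Gᶜ :=
        ge_of_tendsto htend (Filter.eventually_atTop.mpr ⟨N, hkN⟩)
      rw [h0] at hge
      have : (1 : ℝ≥0∞) / (k + 1) ≠ 0 :=
        (ENNReal.div_pos one_ne_zero (by
          exact_mod_cast (ENNReal.add_lt_top.mpr ⟨ENNReal.natCast_lt_top k, ENNReal.one_lt_top⟩).ne)).ne'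
      exact this (le_antisymm hge zero_le)
  refine ⟨fun n => T (Denumerable.ofNat (ℕ × ℕ) n), fun n => hTgδ _, ?_⟩
  rw [key]
  ext x
  simp only [Set.mem_iUnion]
  constructor
  · rintro ⟨p, hp⟩
    exact ⟨Encodable.encode p, by rwa [Denumerable.ofNat_encode]⟩
  · rintro ⟨n, hn⟩
    exact ⟨_, hn⟩
end

section
/- Let X be a topological space, Y a metric space, α a countable ordinal, and f : X → Y a Baire-α function. Then there exists a sequence (G_n)_{n=1}^∞ of Σ_α sets in X × Y such that ⋂_{n=1}^∞ G_n = gr(f) and for each x ∈ X the diameter of the vertical section G_n(x) = {y ∈ Y : (x, y) ∈ G_n} tends to 0 as n → ∞. -/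
open Filter Topology

open Set

set_option linter.unusedSectionVars false
set_option maxHeartbeats 1000000

lemma IsBaireClass.continuous_of_zero {X Y : Type*} [TopologicalSpace X] [TopologicalSpace Y]
    {g : X → Y} (h : IsBaireClass 0 g) : Continuous g := by
  cases h with
  | cont _ hc => exact hc
  | lim _ _ _ _ h0 _ _ _ => exact absurd h0 (lt_irrefl 0)

/-- A family of sets whose union is squeezed between `A` and `B`, each member having
complement of additive class at most `α'`. -/
def SandwichFamily {Z : Type*} [TopologicalSpace Z] (α' : Ordinal) (A B : Set Z) : Prop :=
  ∃ (s : ℕ → Set Z) (ρ : ℕ → Ordinal),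
    (∀ i, ρ i ≤ α') ∧ (∀ i, IsSigmaClass (ρ i) (s i)ᶜ) ∧ A ⊆ (⋃ i, s i) ∧ (⋃ i, s i) ⊆ B

section Incl

variable {X Y : Type*} [TopologicalSpace X] [MetricSpace Y]
  {g : X → Y} {h : ℕ → X → Y} {T : ℕ → Set (X × Y)}

lemma low_incl (htend : ∀ x, Tendsto (fun n => h n x) atTop (𝓝 (g x)))
    {a a₁ : ℝ} (ha : a < a₁)
    (hT1 : ∀ k, {p : X × Y | dist (h k p.1) p.2 ≤ a₁} ⊆ T k) :
    {p : X × Y | dist (g p.1) p.2 < a} ⊆ ⋃ N, ⋂ k, T (N + k) := by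
  intro p hp
  have hconv : Tendsto (fun k => dist (h k p.1) p.2) atTop (𝓝 (dist (g p.1) p.2)) :=
    (htend p.1).dist tendsto_const_nhds
  have hev : ∀ᶠ k in atTop, dist (h k p.1) p.2 < a₁ :=
    hconv.eventually_lt_const (lt_trans hp ha)
  obtain ⟨N, hN⟩ := eventually_atTop.mp hev
  exact mem_iUnion.mpr ⟨N, mem_iInter.mpr fun k =>
    hT1 _ (le_of_lt (hN (N + k) (Nat.le_add_right N k)))⟩

lemma high_incl (htend : ∀ x, Tendsto (fun n => h n x) atTop (𝓝 (g x)))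
    {b a₂ : ℝ} (hb : a₂ < b)
    (hT2 : ∀ k, T k ⊆ {p : X × Y | dist (h k p.1) p.2 ≤ a₂}) :
    (⋃ N, ⋂ k, T (N + k)) ⊆ {p : X × Y | dist (g p.1) p.2 < b} := by
  intro p hp
  obtain ⟨N, hN⟩ := mem_iUnion.mp hp
  have hconv : Tendsto (fun k => dist (h k p.1) p.2) atTop (𝓝 (dist (g p.1) p.2)) :=
    (htend p.1).dist tendsto_const_nhds
  have hev : ∀ᶠ k in atTop, dist (h k p.1) p.2 ≤ a₂ := by
    refine eventually_atTop.mpr ⟨N, fun k hk => ?_⟩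
    have hmem := mem_iInter.mp hN (k - N)
    rw [Nat.add_sub_cancel' hk] at hmem
    exact hT2 k hmem
  exact lt_of_le_of_lt (le_of_tendsto hconv hev) hb

lemma lowq_incl (htend : ∀ x, Tendsto (fun n => h n x) atTop (𝓝 (g x)))
    {b b₂ : ℝ} (hb : b₂ < b)
    (hT1 : ∀ k, {p : X × Y | b₂ ≤ dist (h k p.1) p.2} ⊆ T k) :
    {p : X × Y | b < dist (g p.1) p.2} ⊆ ⋃ N, ⋂ k, T (N + k) := by
  intro p hp
  have hconv : Tendsto (fun k => dist (h k p.1) p.2) atTop (𝓝 (dist (g p.1) p.2)) :=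
    (htend p.1).dist tendsto_const_nhds
  have hev : ∀ᶠ k in atTop, b₂ < dist (h k p.1) p.2 :=
    hconv.eventually_const_lt (lt_trans hb hp)
  obtain ⟨N, hN⟩ := eventually_atTop.mp hev
  exact mem_iUnion.mpr ⟨N, mem_iInter.mpr fun k =>
    hT1 _ (le_of_lt (hN (N + k) (Nat.le_add_right N k)))⟩

lemma highq_incl (htend : ∀ x, Tendsto (fun n => h n x) atTop (𝓝 (g x)))
    {a b₁ : ℝ} (ha : a < b₁)
    (hT2 : ∀ k, T k ⊆ {p : X × Y | b₁ ≤ dist (h k p.1) p.2}) :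
    (⋃ N, ⋂ k, T (N + k)) ⊆ {p : X × Y | a < dist (g p.1) p.2} := by
  intro p hp
  obtain ⟨N, hN⟩ := mem_iUnion.mp hp
  have hconv : Tendsto (fun k => dist (h k p.1) p.2) atTop (𝓝 (dist (g p.1) p.2)) :=
    (htend p.1).dist tendsto_const_nhds
  have hev : ∀ᶠ k in atTop, b₁ ≤ dist (h k p.1) p.2 := by
    refine eventually_atTop.mpr ⟨N, fun k hk => ?_⟩
    have hmem := mem_iInter.mp hN (k - N)
    rw [Nat.add_sub_cancel' hk] at hmem
    exact hT2 k hmem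
  exact lt_of_lt_of_le ha (ge_of_tendsto hconv hev)

lemma compl_iInter_class {u : ℕ → ℕ → Set (X × Y)} {ρu : ℕ → ℕ → Ordinal} {γ : Ordinal}
    (h1γ : 1 < γ) (hρ : ∀ k i, ρu k i < γ)
    (hcls : ∀ k i, IsSigmaClass (ρu k i) (u k i)ᶜ) (N : ℕ) :
    IsSigmaClass γ ((⋂ k, ((⋃ i, u (N + k) i)ᶜ))ᶜ) := by
  have hset : ((⋂ k, ((⋃ i, u (N + k) i)ᶜ))ᶜ : Set (X × Y))
      = ⋃ j, u (N + (Nat.unpair j).1) (Nat.unpair j).2 := by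
    ext p
    simp only [mem_compl_iff, mem_iInter, mem_iUnion, not_forall, not_not]
    constructor
    · rintro ⟨k, i, hp⟩
      exact ⟨Nat.pair k i, by simpa [Nat.unpair_pair] using hp⟩
    · rintro ⟨j, hp⟩
      exact ⟨(Nat.unpair j).1, (Nat.unpair j).2, hp⟩
  rw [hset]
  exact IsSigmaClass.union γ _ (fun j => ρu (N + (Nat.unpair j).1) (Nat.unpair j).2) h1γ
    (fun j => hρ _ _) (fun j => hcls _ _)

end Incl

section Main

variable {X Y : Type*} [TopologicalSpace X] [MetricSpace Y]

lemma sandwich_main {γ : Ordinal} {g : X → Y} (hg : IsBaireClass γ g) :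
    ∀ a b : ℝ, a < b →
      SandwichFamily (max γ 1) {p : X × Y | dist (g p.1) p.2 < a}
        {p : X × Y | dist (g p.1) p.2 < b} ∧
      SandwichFamily (max γ 1) {p : X × Y | b < dist (g p.1) p.2}
        {p : X × Y | a < dist (g p.1) p.2} := by
  induction hg with
  | cont g hc =>
    intro a b hab
    set c : ℝ := (a + b) / 2 with hc_def
    have hac : a < c := by rw [hc_def]; linarith
    have hcb : c < b := by rw [hc_def]; linarith
    have hdc : Continuous fun p : X × Y => dist (g p.1) p.2 :=
      (hc.comp continuous_fst).dist continuous_snd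
    constructor
    · refine ⟨fun _ => {p : X × Y | dist (g p.1) p.2 ≤ c}, fun _ => 1,
        fun i => le_max_right _ _, fun i => ?_, ?_, ?_⟩
      · exact IsSigmaClass.open_ _ ((isClosed_le hdc continuous_const).isOpen_compl)
      · intro p hp
        exact Set.mem_iUnion.mpr ⟨0, le_of_lt (lt_trans hp hac)⟩
      · intro p hp
        obtain ⟨i, hi⟩ := Set.mem_iUnion.mp hp
        exact lt_of_le_of_lt hi hcb
    · refine ⟨fun _ => {p : X × Y | c ≤ dist (g p.1) p.2}, fun _ => 1,
        fun i => le_max_right _ _, fun i => ?_, ?_, ?_⟩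
      · have : ({p : X × Y | c ≤ dist (g p.1) p.2}ᶜ : Set (X × Y))
            = {p : X × Y | dist (g p.1) p.2 < c} := by
          ext p; simp [not_le]
        rw [this]
        exact IsSigmaClass.open_ _ (isOpen_lt hdc continuous_const)
      · intro p hp
        exact Set.mem_iUnion.mpr ⟨0, le_of_lt (lt_trans hcb hp)⟩
      · intro p hp
        obtain ⟨i, hi⟩ := Set.mem_iUnion.mp hp
        exact lt_of_lt_of_le hac hi
  | lim γ' f' hs βs hpos hβ hB htend ih =>
    intro a b hab
    rcases (Order.one_le_iff_pos.mpr hpos).lt_or_eq with h1γ | h1γ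
    · -- 1 < γ'
      set c₁ : ℝ := a + (b - a) / 3 with hc1_def
      set c₂ : ℝ := a + 2 * (b - a) / 3 with hc2_def
      have hac1 : a < c₁ := by rw [hc1_def]; linarith
      have hc12 : c₁ < c₂ := by rw [hc1_def, hc2_def]; linarith
      have hc2b : c₂ < b := by rw [hc2_def]; linarith
      constructor
      · -- P part: use Q parts of ih
        choose u ρu hρu hcls hlo hhi using fun k => (ih k c₁ c₂ hc12).2
        have hT1 : ∀ k, {p : X × Y | dist (hs k p.1) p.2 ≤ c₁} ⊆ (⋃ i, u k i)ᶜ :=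
          fun k p hp hmem =>
            absurd (show c₁ < dist (hs k p.1) p.2 from hhi k hmem) (not_lt.mpr hp)
        have hT2 : ∀ k, ((⋃ i, u k i)ᶜ : Set (X × Y)) ⊆
            {p : X × Y | dist (hs k p.1) p.2 ≤ c₂} :=
          fun k p hp =>
            show dist (hs k p.1) p.2 ≤ c₂ from
              not_lt.mp (fun hgt => hp (hlo k (show c₂ < dist (hs k p.1) p.2 from hgt)))
        refine ⟨fun N => ⋂ k, ((⋃ i, u (N + k) i)ᶜ), fun _ => γ',
          fun i => le_max_left _ _, fun N => ?_, ?_, ?_⟩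
        · exact compl_iInter_class h1γ
            (fun k i => lt_of_le_of_lt (hρu k i) (max_lt (hβ k) h1γ)) hcls N
        · exact low_incl (T := fun k => (⋃ i, u k i)ᶜ) htend hac1 hT1
        · exact high_incl (T := fun k => (⋃ i, u k i)ᶜ) htend hc2b hT2
      · -- Q part: use P parts of ih
        choose u ρu hρu hcls hlo hhi using fun k => (ih k c₁ c₂ hc12).1
        have hT1 : ∀ k, {p : X × Y | c₂ ≤ dist (hs k p.1) p.2} ⊆ (⋃ i, u k i)ᶜ :=
          fun k p hp hmem =>
            absurd (show dist (hs k p.1) p.2 < c₂ from hhi k hmem) (not_lt.mpr hp)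
        have hT2 : ∀ k, ((⋃ i, u k i)ᶜ : Set (X × Y)) ⊆
            {p : X × Y | c₁ ≤ dist (hs k p.1) p.2} :=
          fun k p hp =>
            show c₁ ≤ dist (hs k p.1) p.2 from
              not_lt.mp (fun hlt => hp (hlo k (show dist (hs k p.1) p.2 < c₁ from hlt)))
        refine ⟨fun N => ⋂ k, ((⋃ i, u (N + k) i)ᶜ), fun _ => γ',
          fun i => le_max_left _ _, fun N => ?_, ?_, ?_⟩
        · exact compl_iInter_class h1γ
            (fun k i => lt_of_le_of_lt (hρu k i) (max_lt (hβ k) h1γ)) hcls N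
        · exact lowq_incl (T := fun k => (⋃ i, u k i)ᶜ) htend hc2b hT1
        · exact highq_incl (T := fun k => (⋃ i, u k i)ᶜ) htend hac1 hT2
    · -- γ' = 1
      subst h1γ
      have hcont : ∀ k, Continuous (hs k) := by
        intro k
        have h0 : βs k = 0 := Ordinal.lt_one_iff_zero.mp (hβ k)
        exact IsBaireClass.continuous_of_zero (h0 ▸ hB k)
      have hdc : ∀ k, Continuous fun p : X × Y => dist (hs k p.1) p.2 :=
        fun k => ((hcont k).comp continuous_fst).dist continuous_snd
      set c : ℝ := (a + b) / 2 with hc_def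
      have hac : a < c := by rw [hc_def]; linarith
      have hcb : c < b := by rw [hc_def]; linarith
      constructor
      · refine ⟨fun N => ⋂ k, {p : X × Y | dist (hs (N + k) p.1) p.2 ≤ c}, fun _ => 1,
          fun i => le_max_right _ _, fun N => ?_, ?_, ?_⟩
        · exact IsSigmaClass.open_ _
            ((isClosed_iInter fun k => isClosed_le (hdc _) continuous_const).isOpen_compl)
        · exact low_incl (T := fun j => {p : X × Y | dist (hs j p.1) p.2 ≤ c}) htend hac (fun k => subset_rfl)
        · exact high_incl (T := fun j => {p : X × Y | dist (hs j p.1) p.2 ≤ c}) htend hcb (fun k => subset_rfl)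
      · refine ⟨fun N => ⋂ k, {p : X × Y | c ≤ dist (hs (N + k) p.1) p.2}, fun _ => 1,
          fun i => le_max_right _ _, fun N => ?_, ?_, ?_⟩
        · exact IsSigmaClass.open_ _
            ((isClosed_iInter fun k => isClosed_le continuous_const (hdc _)).isOpen_compl)
        · exact lowq_incl (T := fun j => {p : X × Y | c ≤ dist (hs j p.1) p.2}) htend hcb (fun k => subset_rfl)
        · exact highq_incl (T := fun j => {p : X × Y | c ≤ dist (hs j p.1) p.2}) htend hac (fun k => subset_rfl)

end Main

/-- If `f : X → Y` is Baire-`α` (X topological, Y metric, `α ≥ 1` a countable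
ordinal), then there is a sequence of `Σ_α` sets in `X × Y` whose intersection is the graph
of `f` and whose vertical sections above each `x` have diameter tending to `0`. -/
theorem baire_graph_sigmaClass_sets
    {X Y : Type*} [TopologicalSpace X] [MetricSpace Y]
    (α : Ordinal) (hα : α.card ≤ Cardinal.aleph0) (hα1 : 1 ≤ α)
    (f : X → Y) (hf : IsBaireClass α f) :
    ∃ G : ℕ → Set (X × Y),
      (∀ n, IsSigmaClass α (G n)) ∧
      (⋂ n, G n) = {p : X × Y | p.2 = f p.1} ∧
      (∀ x : X,
        Tendsto (fun n => EMetric.diam {y : Y | (x, y) ∈ G n}) atTop (𝓝 0)) := by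
  cases hf with
  | cont _ hc =>
    exact absurd (Order.one_le_iff_pos.mp hα1) (lt_irrefl 0)
  | lim _ _ gs βs hpos hβ hBg htend =>
    set am : ℕ → ℝ := fun m => 1 / (2 * ((m : ℝ) + 1)) with ham_def
    set bm : ℕ → ℝ := fun m => 1 / ((m : ℝ) + 1) with hbm_def
    have hampos : ∀ m, 0 < am m := by intro m; rw [ham_def]; positivity
    have hambm : ∀ m, am m < bm m := by
      intro m
      rw [ham_def, hbm_def]
      have h1 : (0 : ℝ) < (m : ℝ) + 1 := by positivity
      exact one_div_lt_one_div_of_lt h1 (by linarith)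
    have hbmpos : ∀ m, 0 < bm m := fun m => lt_trans (hampos m) (hambm m)
    have key : ∀ m : ℕ, ∃ Gm : Set (X × Y), IsSigmaClass α Gm ∧
        (∀ p : X × Y, (∃ n, dist (gs (m + n) p.1) p.2 < am m) → p ∈ Gm) ∧
        (∀ p ∈ Gm, ∃ n, dist (gs (m + n) p.1) p.2 < bm m) := by
      intro m
      rcases hα1.lt_or_eq with h1α | h1α
      · choose u ρu hρu hcls hlo hhi using
          fun n => (sandwich_main (hBg (m + n)) (am m) (bm m) (hambm m)).1
        refine ⟨⋃ j, u (Nat.unpair j).1 (Nat.unpair j).2, ?_, ?_, ?_⟩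
        · exact IsSigmaClass.union α _
            (fun j => ρu (Nat.unpair j).1 (Nat.unpair j).2) h1α
            (fun j => lt_of_le_of_lt (hρu _ _) (max_lt (hβ _) h1α))
            (fun j => hcls _ _)
        · rintro p ⟨n, hn⟩
          obtain ⟨i, hi⟩ := Set.mem_iUnion.mp
            (hlo n (show dist (gs (m + n) p.1) p.2 < am m from hn))
          exact Set.mem_iUnion.mpr ⟨Nat.pair n i, by simpa [Nat.unpair_pair] using hi⟩
        · intro p hp
          obtain ⟨j, hj⟩ := Set.mem_iUnion.mp hp
          exact ⟨(Nat.unpair j).1, hhi _ (Set.mem_iUnion.mpr ⟨(Nat.unpair j).2, hj⟩)⟩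
      · have hcont : ∀ n, Continuous (gs n) := by
          intro n
          have hn : βs n < 1 := by rw [h1α]; exact hβ n
          have h0 : βs n = 0 := Ordinal.lt_one_iff_zero.mp hn
          exact IsBaireClass.continuous_of_zero (h0 ▸ hBg n)
        refine ⟨⋃ n, {p : X × Y | dist (gs (m + n) p.1) p.2 < bm m}, ?_, ?_, ?_⟩
        · rw [← h1α]
          exact IsSigmaClass.open_ _ (isOpen_iUnion fun n =>
            isOpen_lt (((hcont _).comp continuous_fst).dist continuous_snd) continuous_const)
        · rintro p ⟨n, hn⟩
          exact Set.mem_iUnion.mpr ⟨n, lt_trans hn (hambm m)⟩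
        · intro p hp
          obtain ⟨n, hn⟩ := Set.mem_iUnion.mp hp
          exact ⟨n, hn⟩
    choose G hGclass hGlow hGhigh using key
    refine ⟨G, hGclass, ?_, ?_⟩
    · ext p
      simp only [Set.mem_iInter, Set.mem_setOf_eq]
      constructor
      · intro hp
        have hdist : ∀ ε : ℝ, 0 < ε → dist p.2 (f p.1) ≤ ε := by
          intro ε hε
          obtain ⟨N1, hN1⟩ := Metric.tendsto_atTop.mp (htend p.1) (ε / 2) (by linarith)
          obtain ⟨N2, hN2⟩ := exists_nat_gt (2 / ε)
          set M := max N1 N2 with hM_def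
          have hbM : bm M ≤ ε / 2 := by
            have hM2 : (N2 : ℝ) ≤ (M : ℝ) := Nat.cast_le.mpr (le_max_right _ _)
            have h2e : 2 / ε < (M : ℝ) + 1 := by linarith
            have h2ep : (0 : ℝ) < 2 / ε := by positivity
            have := one_div_lt_one_div_of_lt h2ep h2e
            rw [one_div_div] at this
            exact le_of_lt (lt_of_lt_of_le this (by linarith))
          obtain ⟨n, hn⟩ := hGhigh M p (hp M)
          have h1 : dist p.2 (gs (M + n) p.1) ≤ ε / 2 := by
            rw [dist_comm]
            exact le_of_lt (lt_of_lt_of_le hn hbM)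
          have h2 : dist (gs (M + n) p.1) (f p.1) ≤ ε / 2 :=
            le_of_lt (hN1 (M + n) (le_trans (le_max_left _ _) (Nat.le_add_right M n)))
          calc dist p.2 (f p.1) ≤ dist p.2 (gs (M + n) p.1) + dist (gs (M + n) p.1) (f p.1) :=
                dist_triangle _ _ _
            _ ≤ ε := by linarith
        have h0 : dist p.2 (f p.1) = 0 := by
          by_contra h0
          have hpos' : 0 < dist p.2 (f p.1) := lt_of_le_of_ne dist_nonneg (Ne.symm h0)
          linarith [hdist _ (half_pos hpos')]
        exact eq_of_dist_eq_zero h0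
      · intro hp m
        apply hGlow m
        obtain ⟨N, hN⟩ := Metric.tendsto_atTop.mp (htend p.1) (am m) (hampos m)
        refine ⟨N, ?_⟩
        rw [hp]
        exact hN (m + N) (Nat.le_add_left N m)
    · intro x
      rw [ENNReal.tendsto_atTop_zero]
      intro ε hε
      obtain ⟨δ, hδpos, hδε⟩ : ∃ δ : ℝ, 0 < δ ∧ ENNReal.ofReal (4 * δ) ≤ ε := by
        rcases le_or_gt 1 ε with h | h
        · exact ⟨1 / 4, by norm_num, by
            rw [show (4 : ℝ) * (1 / 4) = 1 by norm_num, ENNReal.ofReal_one]; exact h⟩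
        · refine ⟨ε.toReal / 4, ?_, ?_⟩
          · have := ENNReal.toReal_pos hε.ne' h.ne_top
            linarith
          · rw [show (4 : ℝ) * (ε.toReal / 4) = ε.toReal by ring,
              ENNReal.ofReal_toReal h.ne_top]
      obtain ⟨N1, hN1⟩ := Metric.tendsto_atTop.mp (htend x) δ hδpos
      obtain ⟨N2, hN2⟩ := exists_nat_gt (1 / δ)
      refine ⟨max N1 N2, fun m hm => ?_⟩
      have hbm : bm m ≤ δ := by
        have hm2 : (N2 : ℝ) ≤ (m : ℝ) := Nat.cast_le.mpr (le_trans (le_max_right _ _) hm)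
        have h1d : 1 / δ < (m : ℝ) + 1 := by linarith
        have h1dp : (0 : ℝ) < 1 / δ := by positivity
        have := one_div_lt_one_div_of_lt h1dp h1d
        rw [one_div_one_div] at this
        exact le_of_lt this
      have hkey : ∀ y ∈ {y : Y | (x, y) ∈ G m}, dist y (f x) ≤ 2 * δ := by
        intro y hy
        obtain ⟨n, hn⟩ := hGhigh m (x, y) hy
        have h1 : dist (gs (m + n) x) y < δ := lt_of_lt_of_le hn hbm
        have h2 : dist (gs (m + n) x) (f x) < δ :=
          hN1 (m + n) (le_trans (le_max_left _ _) (le_trans hm (Nat.le_add_right m n)))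
        calc dist y (f x) ≤ dist y (gs (m + n) x) + dist (gs (m + n) x) (f x) :=
              dist_triangle _ _ _
          _ ≤ 2 * δ := by rw [dist_comm y]; linarith
      refine le_trans (EMetric.diam_le fun y hy z hz => ?_) hδε
      rw [edist_dist]
      refine ENNReal.ofReal_le_ofReal ?_
      have hyd := hkey y hy
      have hzd := hkey z hz
      have hcz : dist (f x) z = dist z (f x) := dist_comm _ _
      calc dist y z ≤ dist y (f x) + dist (f x) z := dist_triangle _ _ _
        _ ≤ 4 * δ := by rw [hcz]; linarith
end

section
/- Let X be a topological space, Y a Fréchet space, α a countable ordinal, and f : X → Y a Baire-α function. Then there exists a sequence (G_n)_{n=1}^∞ of Σ_α-strips in X × Y such that ⋂_{n=1}^∞ G_n = gr(f) and for each x ∈ X the diameter of the vertical section G_n(x) tends to 0 as n → ∞. -/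
open Filter Topology

section BSAux

open Set

lemma bs_sigma_one {X : Type*} [TopologicalSpace X] {s : Set X} (h : IsSigmaClass 1 s) :
    IsOpen s := by
  cases h with
  | open_ s hs => exact hs
  | union α s β h1 h2 h3 => exact absurd h1 (lt_irrefl (1:Ordinal))

lemma bs_sigma_inv {X : Type*} [TopologicalSpace X] {α : Ordinal} {s : Set X}
    (h : IsSigmaClass α s) (hα : 1 < α) :
    ∃ (t : ℕ → Set X) (β : ℕ → Ordinal), (∀ i, β i < α) ∧
      (∀ i, IsSigmaClass (β i) (t i)ᶜ) ∧ s = ⋃ i, t i := by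
  cases h with
  | open_ s hs => exact absurd hα (lt_irrefl (1:Ordinal))
  | union α s β h1 h2 h3 => exact ⟨s, β, h2, h3, rfl⟩

lemma bs_iUnion {X : Type*} [TopologicalSpace X] {α : Ordinal} (hα : (1:Ordinal) ≤ α)
    {s : ℕ → Set X} (h : ∀ n, IsSigmaClass α (s n)) : IsSigmaClass α (⋃ n, s n) := by
  rcases eq_or_lt_of_le hα with h1 | h1
  · subst h1
    exact IsSigmaClass.open_ _ (isOpen_iUnion fun n => bs_sigma_one (h n))
  · choose t β h2 h3 h4 using fun n => bs_sigma_inv (h n) h1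
    have e := (Denumerable.eqv (ℕ × ℕ)).symm
    have key : (⋃ n, s n) = ⋃ m : ℕ, t (e m).1 (e m).2 := by
      rw [e.surjective.iUnion_comp (g := fun p : ℕ × ℕ => t p.1 p.2)]
      ext x
      simp only [mem_iUnion, Prod.exists, h4]
    rw [key]
    exact IsSigmaClass.union α _ (fun m => β (e m).1 (e m).2) h1 (fun m => h2 _ _)
      (fun m => h3 _ _)

lemma bs_iUnion' {X : Type*} [TopologicalSpace X] {ι : Type*} [Countable ι] [Nonempty ι]
    {α : Ordinal} (hα : (1:Ordinal) ≤ α) {s : ι → Set X} (h : ∀ i, IsSigmaClass α (s i)) :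
    IsSigmaClass α (⋃ i, s i) := by
  obtain ⟨e, he⟩ := exists_surjective_nat ι
  rw [← he.iUnion_comp s]
  exact bs_iUnion hα fun n => h (e n)

lemma bs_baire_comp_left {Z Y M : Type*} [TopologicalSpace Z] [TopologicalSpace Y]
    [TopologicalSpace M] {φ : Z → Y → M} (hφ : Continuous fun p : Z × Y => φ p.1 p.2)
    {δ : Ordinal} {v : Z → Y} (hv : IsBaireClass δ v) :
    IsBaireClass δ (fun x => φ x (v x)) := by
  induction hv with
  | cont v hv => exact .cont _ (hφ.comp (continuous_id.prodMk hv))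
  | lim δ v g β hδ hβ hg htend IH =>
    exact .lim δ _ (fun n x => φ x (g n x)) β hδ hβ IH (fun x =>
      (hφ.tendsto (x, v x)).comp (tendsto_const_nhds.prodMk_nhds (htend x)))

lemma bs_baire_precomp {Z X Y : Type*} [TopologicalSpace Z] [TopologicalSpace X]
    [TopologicalSpace Y] {γ : Ordinal} {u : X → Y} (hu : IsBaireClass γ u) {e : Z → X}
    (he : Continuous e) : IsBaireClass γ (fun z => u (e z)) := by
  induction hu with
  | cont u hu => exact .cont _ (hu.comp he)
  | lim γ u g β hγ hβ hg htend IH =>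
    exact .lim _ _ (fun n z => g n (e z)) β hγ hβ IH (fun z => htend (e z))

lemma bs_baire_comp2 {Z Y₁ Y₂ M : Type*} [TopologicalSpace Z] [TopologicalSpace Y₁]
    [TopologicalSpace Y₂] [TopologicalSpace M] {φ : Y₁ → Y₂ → M}
    (hφ : Continuous fun p : Y₁ × Y₂ => φ p.1 p.2) {γ : Ordinal} {u : Z → Y₁}
    (hu : IsBaireClass γ u) :
    ∀ {δ : Ordinal} {v : Z → Y₂}, IsBaireClass δ v →
      IsBaireClass (max γ δ) (fun x => φ (u x) (v x)) := by
  induction hu with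
  | cont u hu =>
    intro δ v hv
    rw [max_eq_right (show (0:Ordinal) ≤ δ from zero_le)]
    exact bs_baire_comp_left (φ := fun x y => φ (u x) y)
      (hφ.comp ((hu.comp continuous_fst).prodMk continuous_snd)) hv
  | lim γ u us βs hγ hβ hus htend IH =>
    intro δ v hv
    cases hv with
    | cont v hv =>
      rw [max_eq_left (show (0:Ordinal) ≤ γ from zero_le)]
      exact bs_baire_comp_left (φ := fun x y₁ => φ y₁ (v x))
        (hφ.comp (continuous_snd.prodMk (hv.comp continuous_fst)))
        (IsBaireClass.lim γ u us βs hγ hβ hus htend)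
    | lim δ v vs βs' hδ hβ' hvs htend' =>
      refine IsBaireClass.lim _ _ (fun n x => φ (us n x) (vs n x))
        (fun n => max (βs n) (βs' n)) (hγ.trans_le (le_max_left _ _))
        (fun n => max_lt_max (hβ n) (hβ' n)) (fun n => IH n (hvs n)) (fun x => ?_)
      exact (hφ.tendsto (u x, v x)).comp ((htend x).prodMk_nhds (htend' x))

lemma bs_baire_sum {X Y : Type*} [TopologicalSpace X] [AddCommMonoid Y] [TopologicalSpace Y]
    [ContinuousAdd Y] {ι : Type*} {s : Finset ι} {u : ι → X → Y} {α : Ordinal} (hα : 0 < α)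
    (h : ∀ i ∈ s, ∃ γ < α, IsBaireClass γ (u i)) :
    ∃ γ < α, IsBaireClass γ (fun x => ∑ i ∈ s, u i x) := by
  classical
  induction s using Finset.induction_on with
  | empty => exact ⟨0, hα, by simpa using IsBaireClass.cont (fun _ => (0:Y)) continuous_const⟩
  | @insert a s' ha IH =>
    obtain ⟨γ₁, hγ₁, h1⟩ := h a (Finset.mem_insert_self a s')
    obtain ⟨γ₂, hγ₂, h2⟩ := IH (fun i hi => h i (Finset.mem_insert_of_mem hi))
    refine ⟨max γ₁ γ₂, max_lt hγ₁ hγ₂, ?_⟩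
    have := bs_baire_comp2 (φ := fun a b => a + b)
      (continuous_fst.add continuous_snd) h1 h2
    simpa [Finset.sum_insert ha] using this

end BSAux

section BSPre

open Set EMetric
open scoped ENNReal

lemma bs_inv_nat_pos (i : ℕ) : (0:ℝ≥0∞) < ((i:ℝ≥0∞))⁻¹ :=
  ENNReal.inv_pos.2 (ENNReal.natCast_ne_top i)

lemma bs_preimage {Z M : Type*} [TopologicalSpace Z] [PseudoEMetricSpace M] {γ : Ordinal}
    {h : Z → M} (hh : IsBaireClass γ h) :
    ∀ {α : Ordinal}, γ < α → ∀ {U : Set M}, IsOpen U → IsSigmaClass α (h ⁻¹' U) := by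
  induction hh with
  | cont h hc =>
    intro α hα U hU
    rcases eq_or_lt_of_le (Order.one_le_iff_pos.2 hα) with h1 | h1
    · rw [← h1]
      exact .open_ _ (hU.preimage hc)
    · have key : h ⁻¹' U = ⋃ i : ℕ, h ⁻¹' {z | ((i:ℝ≥0∞))⁻¹ ≤ infEdist z Uᶜ} := by
        ext z
        simp only [mem_preimage, mem_iUnion, mem_setOf_eq]
        constructor
        · intro hz
          have hpos : 0 < infEdist (h z) Uᶜ := by
            rcases (show 0 ≤ infEdist (h z) Uᶜ from zero_le).eq_or_lt with h0 | h0
            · exfalso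
              have : h z ∈ closure Uᶜ := EMetric.mem_closure_iff_infEdist_zero.2 h0.symm
              rw [hU.isClosed_compl.closure_eq] at this
              exact this hz
            · exact h0
          obtain ⟨n, hn⟩ := ENNReal.exists_inv_nat_lt hpos.ne'
          exact ⟨n, hn.le⟩
        · rintro ⟨i, hi⟩
          by_contra hzU
          rw [show infEdist (h z) Uᶜ = 0 from EMetric.infEdist_zero_of_mem (show h z ∈ Uᶜ from hzU)] at hi
          exact absurd (le_antisymm hi zero_le) (bs_inv_nat_pos i).ne'
      rw [key]
      refine IsSigmaClass.union α _ (fun _ => 1) h1 (fun _ => h1) (fun i => ?_)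
      have hc2 : (h ⁻¹' {z | ((i:ℝ≥0∞))⁻¹ ≤ infEdist z Uᶜ})ᶜ
          = h ⁻¹' {z | infEdist z Uᶜ < ((i:ℝ≥0∞))⁻¹} := by
        ext z; simp [not_le]
      rw [hc2]
      exact .open_ _ ((isOpen_lt EMetric.continuous_infEdist continuous_const).preimage hc)
  | lim γ h g β hγ hβ hg htend IH =>
    intro α hα U hU
    have h1γ : (1:Ordinal) ≤ γ := Order.one_le_iff_pos.2 hγ
    have h1α : (1:Ordinal) < α := lt_of_le_of_lt h1γ hα
    set F : ℕ → Set M := fun i => {z | ((i:ℝ≥0∞))⁻¹ ≤ infEdist z Uᶜ} with hF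
    set Q : ℕ × ℕ → Set Z := fun q => ⋂ j : ℕ, (g (q.2 + j)) ⁻¹' F q.1 with hQ
    have key : h ⁻¹' U = ⋃ q : ℕ × ℕ, Q q := by
      ext z
      simp only [mem_preimage, mem_iUnion]
      constructor
      · intro hz
        have hpos : 0 < infEdist (h z) Uᶜ := by
          rcases (show 0 ≤ infEdist (h z) Uᶜ from zero_le).eq_or_lt with h0 | h0
          · exfalso
            have : h z ∈ closure Uᶜ := EMetric.mem_closure_iff_infEdist_zero.2 h0.symm
            rw [hU.isClosed_compl.closure_eq] at this
            exact this hz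
          · exact h0
        obtain ⟨i, hi⟩ := ENNReal.exists_inv_nat_lt hpos.ne'
        have hcont : Tendsto (fun m => infEdist (g m z) Uᶜ) atTop (𝓝 (infEdist (h z) Uᶜ)) :=
          (EMetric.continuous_infEdist.tendsto (h z)).comp (htend z)
        obtain ⟨k, hk⟩ := eventually_atTop.1 (hcont.eventually (eventually_gt_nhds hi))
        exact ⟨(i, k), mem_iInter.2 fun j => (hk (k + j) (Nat.le_add_right k j)).le⟩
      · rintro ⟨⟨i, k⟩, hq⟩
        have htail : Tendsto (fun j : ℕ => g (k + j) z) atTop (𝓝 (h z)) :=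
          (htend z).comp (tendsto_atTop_mono (fun j => Nat.le_add_left j k) tendsto_id)
        have hlim2 : Tendsto (fun j : ℕ => infEdist (g (k + j) z) Uᶜ) atTop
            (𝓝 (infEdist (h z) Uᶜ)) :=
          (EMetric.continuous_infEdist.tendsto (h z)).comp htail
        have hge : ((i:ℝ≥0∞))⁻¹ ≤ infEdist (h z) Uᶜ :=
          ge_of_tendsto' hlim2 (fun j => mem_iInter.1 hq j)
        by_contra hzU
        rw [show infEdist (h z) Uᶜ = 0 from EMetric.infEdist_zero_of_mem (show h z ∈ Uᶜ from hzU)] at hge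
        exact absurd (le_antisymm hge zero_le) (bs_inv_nat_pos i).ne'
    have hQclass : ∀ q : ℕ × ℕ, IsSigmaClass γ (Q q)ᶜ := by
      intro q
      have hc2 : (Q q)ᶜ = ⋃ j : ℕ, (g (q.2 + j)) ⁻¹' (F q.1)ᶜ := by
        simp [hQ, compl_iInter]
      rw [hc2]
      refine bs_iUnion h1γ (fun j => ?_)
      have hopen : IsOpen (F q.1)ᶜ := by
        have : (F q.1)ᶜ = {z | infEdist z Uᶜ < ((q.1 : ℝ≥0∞))⁻¹} := by
          ext z; simp [hF, not_le]
        rw [this]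
        exact isOpen_lt EMetric.continuous_infEdist continuous_const
      exact IH (q.2 + j) (hβ _) hopen
    obtain ⟨e, he⟩ := exists_surjective_nat (ℕ × ℕ)
    have key2 : h ⁻¹' U = ⋃ m : ℕ, Q (e m) := by rw [key, he.iUnion_comp Q]
    rw [key2]
    exact .union α _ (fun _ => γ) h1α (fun _ => hα) (fun m => hQclass (e m))

end BSPre

section BSIdxSec

/-- Index type for rational convex combinations. -/
def BSIdx : Type := {t : Σ k : ℕ, Fin (k + 1) → ℚ // (∀ j, 0 ≤ t.2 j) ∧ ∑ j, t.2 j = 1}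

instance : Countable BSIdx := by unfold BSIdx; infer_instance

instance : Nonempty BSIdx := ⟨⟨⟨0, fun _ => 1⟩, fun _ => zero_le_one, by simp⟩⟩

namespace BSIdx

def deg (t : BSIdx) : ℕ := t.1.1 + 1

def coef (t : BSIdx) (j : ℕ) : ℚ := if h : j < t.1.1 + 1 then t.1.2 ⟨j, h⟩ else 0

lemma coef_nonneg (t : BSIdx) (j : ℕ) : 0 ≤ t.coef j := by
  unfold coef; split
  · exact t.2.1 _
  · exact le_refl 0

lemma coef_eq_zero (t : BSIdx) {j : ℕ} (h : t.deg ≤ j) : t.coef j = 0 := by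
  unfold deg at h
  unfold coef
  exact dif_neg (by omega)

lemma sum_coef (t : BSIdx) : ∑ j ∈ Finset.range t.deg, t.coef j = 1 := by
  have h1 : ∑ j ∈ Finset.range (t.1.1 + 1), t.coef j = ∑ i : Fin (t.1.1 + 1), t.coef i :=
    (Fin.sum_univ_eq_sum_range (fun j => t.coef j) _).symm
  have h2 : ∀ i : Fin (t.1.1 + 1), t.coef i = t.1.2 i := by
    intro i
    unfold coef
    rw [dif_pos i.isLt]
  have h3 : ∑ i : Fin (t.1.1 + 1), t.coef i = ∑ i, t.1.2 i :=
    Finset.sum_congr rfl (fun i _ => h2 i)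
  rw [show t.deg = t.1.1 + 1 from rfl, h1, h3, t.2.2]

lemma sum_coef' (t : BSIdx) {m : ℕ} (h : t.deg ≤ m) :
    ∑ j ∈ Finset.range m, t.coef j = 1 := by
  rw [← t.sum_coef]
  symm
  apply Finset.sum_subset (Finset.range_subset_range.2 h)
  intro j _ hj
  exact t.coef_eq_zero (by simpa using hj)

def combine (a : ℚ) (t₁ t₂ : BSIdx) (ha : 0 ≤ a) (ha1 : a ≤ 1) : BSIdx :=
  ⟨⟨max t₁.1.1 t₂.1.1, fun j => a * t₁.coef j + (1 - a) * t₂.coef j⟩, by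
    constructor
    · intro j
      show 0 ≤ a * t₁.coef j + (1 - a) * t₂.coef j
      have h1 := t₁.coef_nonneg (j : ℕ)
      have h2 := t₂.coef_nonneg (j : ℕ)
      nlinarith
    · show ∑ j : Fin (max t₁.1.1 t₂.1.1 + 1), (a * t₁.coef j + (1 - a) * t₂.coef j) = 1
      rw [Fin.sum_univ_eq_sum_range (fun j => a * t₁.coef j + (1 - a) * t₂.coef j)]
      rw [Finset.sum_add_distrib, ← Finset.mul_sum, ← Finset.mul_sum]
      rw [t₁.sum_coef' (m := max t₁.1.1 t₂.1.1 + 1) (by unfold deg; omega),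
        t₂.sum_coef' (m := max t₁.1.1 t₂.1.1 + 1) (by unfold deg; omega)]
      ring⟩

lemma deg_combine (a : ℚ) (t₁ t₂ : BSIdx) (ha : 0 ≤ a) (ha1 : a ≤ 1) :
    (combine a t₁ t₂ ha ha1).deg = max t₁.1.1 t₂.1.1 + 1 := rfl

lemma coef_combine (a : ℚ) (t₁ t₂ : BSIdx) (ha : 0 ≤ a) (ha1 : a ≤ 1) (j : ℕ) :
    (combine a t₁ t₂ ha ha1).coef j = a * t₁.coef j + (1 - a) * t₂.coef j := by
  rcases lt_or_ge j (max t₁.1.1 t₂.1.1 + 1) with hj | hj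
  · exact dif_pos hj
  · rw [(combine a t₁ t₂ ha ha1).coef_eq_zero (j := j) (by rw [deg_combine]; omega),
      t₁.coef_eq_zero (j := j) (by unfold deg; omega),
      t₂.coef_eq_zero (j := j) (by unfold deg; omega)]
    ring

def single (j : ℕ) : BSIdx :=
  ⟨⟨j, fun i => if (i : ℕ) = j then 1 else 0⟩, by
    constructor
    · intro i
      show (0:ℚ) ≤ if (i : ℕ) = j then 1 else 0
      split <;> norm_num
    · show ∑ i : Fin (j + 1), (if (i : ℕ) = j then (1:ℚ) else 0) = 1
      rw [Fin.sum_univ_eq_sum_range (fun i => if i = j then (1:ℚ) else 0)]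
      simp⟩

lemma deg_single (j : ℕ) : (single j).deg = j + 1 := rfl

lemma coef_single (j i : ℕ) : (single j).coef i = if i = j then 1 else 0 := by
  rcases lt_or_ge i (j + 1) with hi | hi
  · exact dif_pos hi
  · rw [(single j).coef_eq_zero (j := i) (by rw [deg_single]; omega), if_neg (by omega)]

end BSIdx

end BSIdxSec

open scoped ENNReal

/-- If `X` is a topological space, `Y` a Fréchet space (a locally convex real
topological vector space whose topology comes from a complete translation-invariant metric),
`α ≥ 1` a countable ordinal and `f : X → Y` is Baire-`α`, then there is a sequence of
`Σ_α`-strips in `X × Y` whose intersection is the graph of `f` and whose vertical sections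
above each `x` have diameter tending to `0`. -/
theorem baire_graph_sigmaClass_strips
    {X Y : Type*} [TopologicalSpace X]
    [AddCommGroup Y] [Module ℝ Y] [MetricSpace Y]
    [IsTopologicalAddGroup Y] [ContinuousSMul ℝ Y] [LocallyConvexSpace ℝ Y]
    [CompleteSpace Y]
    (hinv : ∀ a x y : Y, dist (a + x) (a + y) = dist x y)
    (α : Ordinal) (hα : α.card ≤ Cardinal.aleph0) (hα1 : 1 ≤ α)
    (f : X → Y) (hf : IsBaireClass α f) :
    ∃ G : ℕ → Set (X × Y),
      (∀ n, IsSigmaClass α (G n)) ∧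
      (∀ n, ∀ x : X, Convex ℝ {y : Y | (x, y) ∈ G n}) ∧
      (⋂ n, G n) = {p : X × Y | p.2 = f p.1} ∧
      (∀ x : X,
        Tendsto (fun n => EMetric.diam {y : Y | (x, y) ∈ G n}) atTop (𝓝 0)) := by
  classical
  cases hf with
  | cont f hc =>
    rw [nonpos_iff_eq_zero] at hα1
    exact absurd hα1 one_ne_zero
  | lim _ _ g β h0 hβ hg hlim =>
  -- translation invariance consequences
  have hd2 : ∀ y z : Y, dist y z = dist (y - z) 0 := by
    intro y z
    calc dist y z = dist (-z + y) (-z + z) := (hinv (-z) y z).symm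
      _ = dist (y - z) 0 := by rw [neg_add_cancel, neg_add_eq_sub]
  have hd1 : ∀ u w : Y, dist (u + w) 0 ≤ dist u 0 + dist w 0 := by
    intro u w
    have e1 : dist (u + w) w = dist u 0 := by
      calc dist (u + w) w = dist (w + u) (w + 0) := by rw [add_comm u w, add_zero]
        _ = dist u 0 := hinv w u 0
    calc dist (u + w) 0 ≤ dist (u + w) w + dist w 0 := dist_triangle _ _ _
      _ = dist u 0 + dist w 0 := by rw [e1]
  have hαpos : (0 : Ordinal) < α := lt_of_lt_of_le zero_lt_one hα1
  -- convex open neighborhoods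
  have hWex : ∀ n : ℕ, ∃ W : Set Y, ((0:Y) ∈ W ∧ IsOpen W ∧ Convex ℝ W) ∧
      W ⊆ Metric.ball (0:Y) (1/((n:ℝ)+1)) := by
    intro n
    exact (LocallyConvexSpace.convex_open_basis_zero ℝ Y).mem_iff.1
      (Metric.ball_mem_nhds (0:Y) (by positivity))
  choose W hWprop hWsub using hWex
  have hW0 : ∀ n, (0:Y) ∈ W n := fun n => (hWprop n).1
  have hWopen : ∀ n, IsOpen (W n) := fun n => (hWprop n).2.1
  have hWconv : ∀ n, Convex ℝ (W n) := fun n => (hWprop n).2.2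
  obtain ⟨e, he⟩ := exists_surjective_nat BSIdx
  set cb : ℕ → BSIdx → X → Y :=
    fun n t x => ∑ j ∈ Finset.range t.deg, (t.coef j : ℝ) • g (n + j) x with hcb
  -- membership description
  have hmem : ∀ (n : ℕ) (x : X) (y : Y),
      ((x, y) ∈ ⋃ m : ℕ, {p : X × Y | p.2 - cb n (e m) p.1 ∈ W n}) ↔
        ∃ t : BSIdx, y - cb n t x ∈ W n := by
    intro n x y
    simp only [Set.mem_iUnion, Set.mem_setOf_eq]
    constructor
    · rintro ⟨m, hm⟩; exact ⟨e m, hm⟩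
    · rintro ⟨t, ht⟩
      obtain ⟨m, rfl⟩ := he t
      exact ⟨m, ht⟩
  -- extension of the sum defining cb
  have hext : ∀ (t : BSIdx) (m : ℕ), t.deg ≤ m → ∀ (n : ℕ) (x : X),
      ∑ j ∈ Finset.range m, (t.coef j : ℝ) • g (n + j) x = cb n t x := by
    intro t m hm n x
    rw [hcb]
    symm
    apply Finset.sum_subset (Finset.range_subset_range.2 hm)
    intro j _ hj
    rw [t.coef_eq_zero (by simpa using hj)]
    simp
  -- single combinations
  have hsingle : ∀ (n j : ℕ) (x : X), cb n (BSIdx.single j) x = g (n + j) x := by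
    intro n j x
    rw [hcb]
    simp only [BSIdx.deg_single, BSIdx.coef_single]
    rw [Finset.sum_eq_single j]
    · simp
    · intro i _ hij
      simp [hij]
    · intro hj
      exact absurd (Finset.self_mem_range_succ j) hj
  -- Baire class of cb
  have hcbB : ∀ (n : ℕ) (t : BSIdx), ∃ γ < α, IsBaireClass γ (cb n t) := by
    intro n t
    rw [hcb]
    apply bs_baire_sum (u := fun j x => (t.coef j : ℝ) • g (n + j) x) hαpos
    intro j _
    refine ⟨β (n + j), hβ _, ?_⟩
    exact bs_baire_comp_left (φ := fun (_ : X) (y : Y) => (t.coef j : ℝ) • y)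
      (continuous_snd.const_smul _) (hg (n + j))
  -- the graph is inside every strip
  have hgraph : ∀ (x : X) (n : ℕ), ∃ t : BSIdx, f x - cb n t x ∈ W n := by
    intro x n
    have hten : Tendsto (fun m => f x - g m x) atTop (𝓝 0) := by
      have := (tendsto_const_nhds : Tendsto (fun _ : ℕ => f x) atTop (𝓝 (f x))).sub (hlim x)
      simpa using this
    obtain ⟨N, hN⟩ := eventually_atTop.1 (hten ((hWopen n).mem_nhds (hW0 n)))
    refine ⟨BSIdx.single N, ?_⟩
    rw [hsingle n N x]
    exact hN (n + N) (Nat.le_add_left N n)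
  -- smallness of sections
  have hsmall : ∀ (x : X) (ε : ℝ), 0 < ε → ∃ N, ∀ n, N ≤ n → ∀ y : Y,
      (∃ t : BSIdx, y - cb n t x ∈ W n) → dist y (f x) < ε + 1/((n:ℝ)+1) := by
    intro x ε hε
    obtain ⟨U, ⟨hU0, hUopen, hUconv⟩, hUsub⟩ :=
      (LocallyConvexSpace.convex_open_basis_zero ℝ Y).mem_iff.1
        (Metric.ball_mem_nhds (0:Y) hε)
    have hten : Tendsto (fun m => g m x - f x) atTop (𝓝 0) := by
      have := (hlim x).sub (tendsto_const_nhds : Tendsto (fun _ : ℕ => f x) atTop (𝓝 (f x)))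
      simpa using this
    obtain ⟨N, hN⟩ := eventually_atTop.1 (hten (hUopen.mem_nhds hU0))
    refine ⟨N, fun n hn y hy => ?_⟩
    obtain ⟨t, hw⟩ := hy
    have hsum1 : ∑ j ∈ Finset.range t.deg, ((t.coef j : ℝ)) = 1 := by
      exact_mod_cast t.sum_coef
    have hu : cb n t x - f x ∈ U := by
      have hrepr : cb n t x - f x
          = ∑ j ∈ Finset.range t.deg, (t.coef j : ℝ) • (g (n + j) x - f x) := by
        rw [hcb]
        simp_rw [smul_sub]
        rw [Finset.sum_sub_distrib, ← Finset.sum_smul, hsum1, one_smul]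
      rw [hrepr]
      apply hUconv.sum_mem
      · intro j _
        exact_mod_cast t.coef_nonneg j
      · exact hsum1
      · intro j _
        exact hN (n + j) (le_trans hn (Nat.le_add_right n j))
    have hb1 : dist (cb n t x - f x) 0 < ε := by
      have := hUsub hu
      rwa [Metric.mem_ball] at this
    have hb2 : dist (y - cb n t x) 0 < 1/((n:ℝ)+1) := by
      have := hWsub n hw
      rwa [Metric.mem_ball] at this
    have hdecomp : y - f x = (cb n t x - f x) + (y - cb n t x) := by abel
    calc dist y (f x) = dist (y - f x) 0 := hd2 y (f x)
      _ = dist ((cb n t x - f x) + (y - cb n t x)) 0 := by rw [← hdecomp]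
      _ ≤ dist (cb n t x - f x) 0 + dist (y - cb n t x) 0 := hd1 _ _
      _ < ε + 1/((n:ℝ)+1) := add_lt_add hb1 hb2
  refine ⟨fun n => ⋃ m : ℕ, {p : X × Y | p.2 - cb n (e m) p.1 ∈ W n}, ?_, ?_, ?_, ?_⟩
  · -- Σ_α class
    intro n
    refine bs_iUnion hα1 (fun m => ?_)
    obtain ⟨γ, hγ, hB⟩ := hcbB n (e m)
    have h1 : IsBaireClass γ (fun p : X × Y => cb n (e m) p.1) :=
      bs_baire_precomp hB continuous_fst
    have h2 := bs_baire_comp2 (φ := fun (a b : Y) => b - a)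
      (continuous_snd.sub continuous_fst) h1
      (IsBaireClass.cont (fun p : X × Y => p.2) continuous_snd)
    rw [max_eq_left (show (0:Ordinal) ≤ γ from zero_le)] at h2
    exact bs_preimage h2 hγ (hWopen n)
  · -- convexity of sections
    intro n x
    have hsect : {y : Y | (x, y) ∈ ⋃ m : ℕ, {p : X × Y | p.2 - cb n (e m) p.1 ∈ W n}}
        = {y : Y | ∃ t : BSIdx, y - cb n t x ∈ W n} := Set.ext fun y => hmem n x y
    rw [hsect]
    intro y₁ hy₁ y₂ hy₂ a b ha hb hab
    obtain ⟨t₁, hw₁⟩ := hy₁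
    obtain ⟨t₂, hw₂⟩ := hy₂
    rcases ha.eq_or_lt with h0a | h0a
    · -- a = 0
      refine ⟨t₂, ?_⟩
      have hb1 : b = 1 := by linarith
      rw [← h0a, hb1]
      simpa using hw₂
    · -- 0 < a
      have hzW : a • (y₁ - cb n t₁ x) + b • (y₂ - cb n t₂ x) ∈ W n :=
        hWconv n hw₁ hw₂ ha hb hab
      set c₁ := cb n t₁ x with hc₁
      set c₂ := cb n t₂ x with hc₂
      set z := a • (y₁ - c₁) + b • (y₂ - c₂) with hz
      have hcont : Continuous fun q : ℝ => z + q • (c₁ - c₂) :=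
        continuous_const.add (continuous_id.smul continuous_const)
      have hev : ∀ᶠ q in 𝓝 (0:ℝ), z + q • (c₁ - c₂) ∈ W n := by
        have h' : Tendsto (fun q : ℝ => z + q • (c₁ - c₂)) (𝓝 0) (𝓝 z) := by
          have := hcont.tendsto 0
          simpa using this
        exact h' ((hWopen n).mem_nhds hzW)
      obtain ⟨δ, hδpos, hδ⟩ := Metric.eventually_nhds_iff.1 hev
      have hlt : max 0 (a - δ) < a := max_lt h0a (by linarith)
      obtain ⟨a', h₁, h₂⟩ := exists_rat_btwn hlt
      have ha'0R : (0:ℝ) ≤ (a' : ℝ) := le_trans (le_max_left 0 (a - δ)) h₁.le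
      have ha1 : a ≤ 1 := by linarith
      have ha'1R : (a' : ℝ) ≤ 1 := le_trans h₂.le ha1
      have ha'0 : (0:ℚ) ≤ a' := by exact_mod_cast ha'0R
      have ha'1 : a' ≤ 1 := by exact_mod_cast ha'1R
      refine ⟨BSIdx.combine a' t₁ t₂ ha'0 ha'1, ?_⟩
      have hdeg1 : t₁.deg ≤ (BSIdx.combine a' t₁ t₂ ha'0 ha'1).deg := by
        rw [BSIdx.deg_combine]; unfold BSIdx.deg; omega
      have hdeg2 : t₂.deg ≤ (BSIdx.combine a' t₁ t₂ ha'0 ha'1).deg := by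
        rw [BSIdx.deg_combine]; unfold BSIdx.deg; omega
      have hcbt : cb n (BSIdx.combine a' t₁ t₂ ha'0 ha'1) x
          = (a' : ℝ) • c₁ + (1 - (a' : ℝ)) • c₂ := by
        rw [hc₁, hc₂, ← hext t₁ _ hdeg1 n x, ← hext t₂ _ hdeg2 n x, hcb]
        rw [Finset.smul_sum, Finset.smul_sum, ← Finset.sum_add_distrib]
        refine Finset.sum_congr rfl (fun j _ => ?_)
        rw [BSIdx.coef_combine]
        push_cast
        rw [add_smul, mul_smul, mul_smul]
      have key : a • y₁ + b • y₂ - cb n (BSIdx.combine a' t₁ t₂ ha'0 ha'1) x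
          = z + (a - (a' : ℝ)) • (c₁ - c₂) := by
        rw [hcbt, hz]
        have hb' : b = 1 - a := by linarith
        rw [hb']
        module
      rw [key]
      apply hδ
      have hgt : a - δ < (a' : ℝ) := lt_of_le_of_lt (le_max_right 0 (a - δ)) h₁
      rw [Real.dist_eq, sub_zero, abs_of_pos (by linarith : (0:ℝ) < a - (a' : ℝ))]
      linarith
  · -- intersection is the graph
    ext ⟨x, y⟩
    simp only [Set.mem_iInter, Set.mem_setOf_eq]
    constructor
    · intro hy
      have hyn : ∀ n, ∃ t : BSIdx, y - cb n t x ∈ W n := fun n => (hmem n x y).1 (hy n)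
      have hle : ∀ ε : ℝ, 0 < ε → dist y (f x) ≤ ε := by
        intro ε hε
        obtain ⟨N, hN⟩ := hsmall x (ε/2) (by positivity)
        obtain ⟨n₀, hn₀⟩ := exists_nat_one_div_lt (show (0:ℝ) < ε/2 by positivity)
        have h1 := hN (max N n₀) (le_max_left _ _) y (hyn (max N n₀))
        have h2 : (1:ℝ)/(((max N n₀ : ℕ):ℝ)+1) ≤ 1/((n₀:ℝ)+1) := by
          apply one_div_le_one_div_of_le (by positivity)
          have : (n₀:ℝ) ≤ ((max N n₀ : ℕ):ℝ) := by exact_mod_cast le_max_right N n₀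
          linarith
        linarith [hn₀]
      have hle0 : dist y (f x) ≤ 0 := by
        refine le_of_forall_pos_le_add (fun ε hε => ?_)
        simpa using hle ε hε
      exact dist_le_zero.1 hle0
    · intro hy n
      subst hy
      exact (hmem n x (f x)).2 (hgraph x n)
  · -- diameters tend to 0
    intro x
    rw [ENNReal.tendsto_atTop_zero]
    intro ε hε
    rcases eq_or_ne ε ⊤ with rfl | hne
    · exact ⟨0, fun n _ => le_top⟩
    · have hε'pos : 0 < ε.toReal := ENNReal.toReal_pos hε.ne' hne
      obtain ⟨N₁, hN₁⟩ := hsmall x (ε.toReal/8) (by positivity)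
      obtain ⟨n₀, hn₀⟩ := exists_nat_one_div_lt (show (0:ℝ) < ε.toReal/8 by positivity)
      refine ⟨max N₁ n₀, fun n hn => ?_⟩
      have hsub : {y : Y | (x, y) ∈ ⋃ m : ℕ, {p : X × Y | p.2 - cb n (e m) p.1 ∈ W n}}
          ⊆ Metric.ball (f x) (ε.toReal/4) := by
        intro y hy
        have h1 := hN₁ n (le_trans (le_max_left _ _) hn) y ((hmem n x y).1 hy)
        have hnn₀ : n₀ ≤ n := le_trans (le_max_right _ _) hn
        have h2 : (1:ℝ)/((n:ℝ)+1) ≤ 1/((n₀:ℝ)+1) := by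
          apply one_div_le_one_div_of_le (by positivity)
          have : (n₀:ℝ) ≤ (n:ℝ) := by exact_mod_cast hnn₀
          linarith
        have : dist y (f x) < ε.toReal/4 := by linarith [hn₀]
        exact Metric.mem_ball.2 this
      calc EMetric.diam {y : Y | (x, y) ∈ ⋃ m : ℕ, {p : X × Y | p.2 - cb n (e m) p.1 ∈ W n}}
          ≤ EMetric.diam (Metric.ball (f x) (ε.toReal/4)) := EMetric.diam_mono hsub
        _ ≤ 2 * ENNReal.ofReal (ε.toReal/4) := by
            rw [← Metric.emetric_ball]
            exact EMetric.diam_ball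
        _ ≤ ε := by
            rw [show (2:ℝ≥0∞) = ENNReal.ofReal 2 from (ENNReal.ofReal_ofNat 2).symm,
              ← ENNReal.ofReal_mul (by norm_num : (0:ℝ) ≤ 2)]
            calc ENNReal.ofReal (2 * (ε.toReal/4)) ≤ ENNReal.ofReal ε.toReal :=
                ENNReal.ofReal_le_ofReal (by linarith)
              _ = ε := ENNReal.ofReal_toReal hne
end

section
/- Let X be a topological space, Y a metric space, and f : X → Y a Baire-2 function. Then there exists a sequence (G_n)_{n=1}^∞ of Fσ sets in X × Y such that ⋂_{n=1}^∞ G_n = gr(f) and for each x ∈ X the diameter of the vertical section G_n(x) = {y ∈ Y : (x, y) ∈ G_n} tends to 0 as n → ∞. -/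
open Filter Topology

/-- An Fσ set is a countable union of closed sets. -/
def IsFSigma {Z : Type*} [TopologicalSpace Z] (s : Set Z) : Prop :=
  ∃ F : ℕ → Set Z, (∀ n, IsClosed (F n)) ∧ s = ⋃ n, F n

lemma isFSigma_iUnion {Z : Type*} [TopologicalSpace Z] {s : ℕ → Set Z}
    (h : ∀ n, IsFSigma (s n)) : IsFSigma (⋃ n, s n) := by
  choose F hF hs using h
  refine ⟨fun k => F k.unpair.1 k.unpair.2, fun k => hF _ _, ?_⟩
  ext z
  simp only [Set.mem_iUnion]
  constructor
  · rintro ⟨n, hn⟩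
    rw [hs n] at hn
    obtain ⟨j, hj⟩ := Set.mem_iUnion.1 hn
    exact ⟨Nat.pair n j, by simpa [Nat.unpair_pair] using hj⟩
  · rintro ⟨k, hk⟩
    exact ⟨k.unpair.1, by rw [hs]; exact Set.mem_iUnion.2 ⟨k.unpair.2, hk⟩⟩

lemma baireOne_sandwich {X Y : Type*} [TopologicalSpace X] [MetricSpace Y]
    {g : X → Y} (hg : BaireOne g) (ε : ENNReal) :
    ∃ E : Set (X × Y), IsFSigma E ∧
      (∀ p : X × Y, edist p.2 (g p.1) < ε → p ∈ E) ∧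
      (∀ p ∈ E, edist p.2 (g p.1) ≤ ε) := by
  obtain ⟨h, hc, hl⟩ := hg
  refine ⟨⋃ j, {p : X × Y | ∀ k, j ≤ k → edist p.2 (h k p.1) ≤ ε}, ⟨_, fun j => ?_, rfl⟩,
    ?_, ?_⟩
  · have : {p : X × Y | ∀ k, j ≤ k → edist p.2 (h k p.1) ≤ ε}
        = ⋂ k, ⋂ (_ : j ≤ k), {p : X × Y | edist p.2 (h k p.1) ≤ ε} := by
      ext p; simp
    rw [this]
    refine isClosed_iInter fun k => isClosed_iInter fun _ => ?_
    exact isClosed_le (continuous_edist.comp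
      (continuous_snd.prodMk ((hc k).comp continuous_fst))) continuous_const
  · intro p hp
    have ht : Tendsto (fun k => edist p.2 (h k p.1)) atTop (𝓝 (edist p.2 (g p.1))) :=
      (continuous_edist.comp (continuous_const.prodMk continuous_id)).continuousAt.tendsto.comp
        (hl p.1) |>.congr (fun k => rfl)
    obtain ⟨j, hj⟩ := (ht.eventually_lt_const hp).exists_forall_of_atTop
    exact Set.mem_iUnion.2 ⟨j, fun k hk => (hj k hk).le⟩
  · intro p hp
    obtain ⟨j, hj⟩ := Set.mem_iUnion.1 hp
    have ht : Tendsto (fun k => edist p.2 (h k p.1)) atTop (𝓝 (edist p.2 (g p.1))) :=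
      (continuous_edist.comp (continuous_const.prodMk continuous_id)).continuousAt.tendsto.comp
        (hl p.1) |>.congr (fun k => rfl)
    exact le_of_tendsto ht (eventually_atTop.2 ⟨j, hj⟩)

/-- If `X` is a topological space, `Y` a metric space and `f : X → Y` is Baire-2,
then there is a sequence of Fσ sets in `X × Y` whose intersection is the graph of `f` and
whose vertical sections above each `x` have diameter tending to `0`. -/
theorem baireTwo_graph_fsigma_sets
    {X Y : Type*} [TopologicalSpace X] [MetricSpace Y]
    (f : X → Y) (hf : BaireTwo f) :
    ∃ G : ℕ → Set (X × Y),
      (∀ n, IsFSigma (G n)) ∧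
      (⋂ n, G n) = {p : X × Y | p.2 = f p.1} ∧
      (∀ x : X,
        Tendsto (fun n => EMetric.diam {y : Y | (x, y) ∈ G n}) atTop (𝓝 0)) := by
  obtain ⟨g, hg1, hgl⟩ := hf
  have key : ∀ m n : ℕ, ∃ E : Set (X × Y), IsFSigma E ∧
      (∀ p : X × Y, edist p.2 (g m p.1) < (↑(n + 1) : ENNReal)⁻¹ → p ∈ E) ∧
      (∀ p ∈ E, edist p.2 (g m p.1) ≤ (↑(n + 1) : ENNReal)⁻¹) :=
    fun m n => baireOne_sandwich (hg1 m) _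
  choose E hFσ hlow hupp using key
  refine ⟨fun n => ⋃ m, E (n + m) n, fun n => isFSigma_iUnion fun m => hFσ (n + m) n, ?_, ?_⟩
  · ext ⟨x, y⟩
    simp only [Set.mem_iInter, Set.mem_iUnion, Set.mem_setOf_eq]
    constructor
    · intro hmem
      by_contra hne
      set ε := edist y (f x) with hε
      have hε0 : ε ≠ 0 := by simpa [hε, edist_eq_zero] using hne
      have hε20 : ε / 2 ≠ 0 := by simp [ENNReal.div_eq_zero_iff, hε0]
      obtain ⟨N1, hN1⟩ := (EMetric.tendsto_atTop.1 (hgl x)) (ε / 2) (pos_iff_ne_zero.2 hε20)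
      obtain ⟨N2, hN2⟩ := ENNReal.exists_inv_nat_lt hε20
      set n := max N1 N2 with hn
      obtain ⟨m, hm⟩ := hmem n
      have h1 : edist y (g (n + m) x) ≤ (↑(n + 1) : ENNReal)⁻¹ := hupp (n + m) n (x, y) hm
      have hinv : (↑(n + 1) : ENNReal)⁻¹ < ε / 2 := by
        refine lt_of_le_of_lt ?_ hN2
        exact ENNReal.inv_le_inv.2 (by exact_mod_cast le_trans (le_max_right N1 N2) (Nat.le_succ n))
      have h2 : edist (g (n + m) x) (f x) < ε / 2 :=
        hN1 (n + m) (le_trans (le_max_left N1 N2) (Nat.le_add_right n m))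
      have : ε < ε := by
        calc ε = edist y (f x) := hε
        _ ≤ edist y (g (n + m) x) + edist (g (n + m) x) (f x) := edist_triangle _ _ _
        _ < ε / 2 + ε / 2 := ENNReal.add_lt_add (lt_of_le_of_lt h1 hinv) h2
        _ = ε := ENNReal.add_halves ε
      exact absurd this (lt_irrefl ε)
    · intro hy n
      have hpos : (0 : ENNReal) < (↑(n + 1) : ENNReal)⁻¹ :=
        ENNReal.inv_pos.2 (ENNReal.natCast_ne_top (n + 1))
      obtain ⟨N, hN⟩ := (EMetric.tendsto_atTop.1 (hgl x)) _ hpos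
      refine ⟨N, hlow (n + N) n (x, y) ?_⟩
      have := hN (n + N) (Nat.le_add_left N n)
      simpa [hy, edist_comm] using this
  · intro x
    rw [ENNReal.tendsto_nhds_zero]
    intro ε hε
    have hε0 : ε ≠ 0 := hε.ne'
    have hq0 : ε / 2 / 2 ≠ 0 := by simp [ENNReal.div_eq_zero_iff, hε0]
    obtain ⟨N1, hN1⟩ := (EMetric.tendsto_atTop.1 (hgl x)) (ε / 2 / 2) (pos_iff_ne_zero.2 hq0)
    obtain ⟨N2, hN2⟩ := ENNReal.exists_inv_nat_lt hq0
    filter_upwards [eventually_ge_atTop (max N1 N2)] with n hn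
    have hsec : ∀ y ∈ {y : Y | (x, y) ∈ ⋃ m, E (n + m) n}, edist y (f x) ≤ ε / 2 := by
      intro y hy
      obtain ⟨m, hm⟩ := Set.mem_iUnion.1 hy
      have h1 : edist y (g (n + m) x) ≤ (↑(n + 1) : ENNReal)⁻¹ := hupp (n + m) n (x, y) hm
      have hinv : (↑(n + 1) : ENNReal)⁻¹ ≤ ε / 2 / 2 := by
        refine le_trans ?_ hN2.le
        exact ENNReal.inv_le_inv.2 (by
          exact_mod_cast le_trans (le_trans (le_max_right N1 N2) hn) (Nat.le_succ n))
      have h2 : edist (g (n + m) x) (f x) ≤ ε / 2 / 2 :=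
        (hN1 (n + m) (le_trans (le_trans (le_max_left N1 N2) hn) (Nat.le_add_right n m))).le
      calc edist y (f x) ≤ edist y (g (n + m) x) + edist (g (n + m) x) (f x) :=
            edist_triangle _ _ _
        _ ≤ ε / 2 / 2 + ε / 2 / 2 := add_le_add (le_trans h1 hinv) h2
        _ = ε / 2 := ENNReal.add_halves _
    refine EMetric.diam_le fun y hy z hz => ?_
    calc edist y z ≤ edist y (f x) + edist (f x) z := edist_triangle _ _ _
      _ ≤ ε / 2 + ε / 2 := add_le_add (hsec y hy) (by rw [edist_comm]; exact hsec z hz)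
      _ = ε := ENNReal.add_halves ε
end

section
/- Let X and Y be σ-compact metric spaces such that X has no isolated points. For every closed set T ⊆ X × Y there exist a countable set A ⊆ X and a function f : A → Y such that the set of accumulation points of the graph of f in X × Y equals T. -/
open Filter Topology

noncomputable def chooseInjAux {X : Type*} (B : ℕ → Set X) (hB : ∀ m, (B m).Infinite) : ℕ → X
  | m => ((hB m).diff (Set.finite_range fun k : Fin m => chooseInjAux B hB k)).nonempty.some
decreasing_by all_goals exact k.2

lemma chooseInjAux_spec {X : Type*} (B : ℕ → Set X) (hB : ∀ m, (B m).Infinite) (m : ℕ) :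
    chooseInjAux B hB m ∈ B m \ Set.range (fun k : Fin m => chooseInjAux B hB k) := by
  rw [chooseInjAux]
  exact Set.Nonempty.some_mem _

lemma chooseInjAux_mem {X : Type*} (B : ℕ → Set X) (hB : ∀ m, (B m).Infinite) (m : ℕ) :
    chooseInjAux B hB m ∈ B m := (chooseInjAux_spec B hB m).1

lemma chooseInjAux_inj {X : Type*} (B : ℕ → Set X) (hB : ∀ m, (B m).Infinite) :
    Function.Injective (chooseInjAux B hB) := by
  intro a b hab
  by_contra hne
  rcases Nat.lt_or_ge a b with h | h
  · exact (chooseInjAux_spec B hB b).2 ⟨⟨a, h⟩, hab⟩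
  · exact (chooseInjAux_spec B hB a).2 ⟨⟨b, lt_of_le_of_ne h (Ne.symm hne)⟩, hab.symm⟩

/-- The set of accumulation points of a set `S` in a topological space: points `p` such that
every neighborhood of `p` meets `S` in a point other than `p`. -/
def accumulationPoints {Z : Type*} [TopologicalSpace Z] (S : Set Z) : Set Z :=
  {p : Z | AccPt p (𝓟 S)}

/-- Let `X` and `Y` be σ-compact metric spaces, `X` without isolated points.
For every closed `T ⊆ X × Y` there are a countable `A ⊆ X` and a function `f : A → Y` whose
graph has accumulation set exactly `T`. -/
theorem exists_countable_graph_accumulation_eq_closed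
    {X Y : Type*} [MetricSpace X] [MetricSpace Y]
    [SigmaCompactSpace X] [SigmaCompactSpace Y]
    (hX : ∀ x : X, Filter.NeBot (𝓝[≠] x))
    (T : Set (X × Y)) (hT : IsClosed T) :
    ∃ A : Set X, A.Countable ∧ ∃ f : A → Y,
      accumulationPoints {q : X × Y | ∃ h : q.1 ∈ A, f ⟨q.1, h⟩ = q.2} = T := by
  rcases T.eq_empty_or_nonempty with rfl | ⟨p₀, hp₀⟩
  · refine ⟨∅, Set.countable_empty, fun a => (Set.notMem_empty _ a.2).elim, ?_⟩
    convert_to accumulationPoints (∅ : Set (X × Y)) = (∅ : Set (X × Y))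
    · congr 1
      ext q
      simp
    · ext p
      simp [accumulationPoints, AccPt, Filter.principal_empty]
  · haveI : Nonempty T := ⟨⟨p₀, hp₀⟩⟩
    obtain ⟨u, hu⟩ := TopologicalSpace.exists_dense_seq T
    set t : ℕ → X × Y := fun n => (u n : X × Y) with ht_def
    have htT : ∀ n, t n ∈ T := fun n => (u n).2
    have hdense : ∀ p ∈ T, ∀ ε > 0, ∃ n, dist (t n) p < ε := by
      intro p hp ε hε
      obtain ⟨n, hn⟩ := Metric.denseRange_iff.mp hu ⟨p, hp⟩ ε hε
      refine ⟨n, ?_⟩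
      rw [Subtype.dist_eq] at hn
      simpa [dist_comm] using hn
    set e : ℕ × ℕ ≃ ℕ := Denumerable.eqv (ℕ × ℕ) with he_def
    set nn : ℕ → ℕ := fun m => (e.symm m).1 with hnn_def
    set r : ℕ → ℝ := fun m => 1 / (m + 1) with hr_def
    have hr_pos : ∀ m, 0 < r m := by
      intro m; simp only [hr_def]; positivity
    set B : ℕ → Set X := fun m => Metric.ball (t (nn m)).1 (r m) with hB_def
    have hB : ∀ m, (B m).Infinite := by
      intro m
      haveI := hX (t (nn m)).1
      exact infinite_of_mem_nhds _ (Metric.ball_mem_nhds _ (hr_pos m))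
    set g : ℕ → X := chooseInjAux B hB with hg_def
    have hg_inj : Function.Injective g := chooseInjAux_inj B hB
    have hg_mem : ∀ m, dist (g m) (t (nn m)).1 < r m := fun m => chooseInjAux_mem B hB m
    set y : ℕ → Y := fun m => (t (nn m)).2 with hy_def
    set s : ℕ → X × Y := fun m => (g m, y m) with hs_def
    have hclose : ∀ m, dist (s m) (t (nn m)) < r m := by
      intro m
      rw [Prod.dist_eq]
      exact max_lt (hg_mem m) (by simpa [hs_def, hy_def] using hr_pos m)
    -- each point of T is an accumulation point of range s
    have hTacc : ∀ p ∈ T, AccPt p (𝓟 (Set.range s)) := by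
      intro p hp
      rw [accPt_iff_nhds]
      intro U hU
      obtain ⟨ε, hε, hball⟩ := Metric.nhds_basis_ball.mem_iff.mp hU
      obtain ⟨n, hn⟩ := hdense p hp (ε / 2) (by positivity)
      -- the set of m with nn m = n is infinite
      have hSn : {m : ℕ | nn m = n}.Infinite := by
        apply Set.Infinite.mono (s := Set.range fun k => e (n, k))
        · rintro m ⟨k, rfl⟩
          simp [hnn_def]
        · apply Set.infinite_range_of_injective
          intro a b hab
          have := e.injective hab
          simpa using congrArg Prod.snd this
      obtain ⟨N, hN⟩ := exists_nat_gt (2 / ε)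
      have hsmall : ∀ m : ℕ, N ≤ m → r m < ε / 2 := by
        intro m hm
        have h1 : (2 : ℝ) / ε < m + 1 := lt_of_lt_of_le hN (by exact_mod_cast Nat.le_succ_of_le hm)
        rw [hr_def]
        rw [div_lt_iff₀ (by positivity), ← div_lt_iff₀' (by positivity : (0:ℝ) < ε / 2)]
        calc (1 : ℝ) / (ε / 2) = 2 / ε := by ring
        _ < m + 1 := h1
      obtain ⟨m₁, hm₁, hm₁N⟩ := hSn.exists_gt N
      obtain ⟨m₂, hm₂, hm₂m₁⟩ := hSn.exists_gt m₁
      have hdist : ∀ m, nn m = n → N < m → dist (s m) p < ε := by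
        intro m hmn hNm
        calc dist (s m) p ≤ dist (s m) (t n) + dist (t n) p := dist_triangle _ _ _
        _ < ε / 2 + ε / 2 := by
            refine add_lt_add (lt_trans ?_ (hsmall m hNm.le)) hn
            rw [← hmn]; exact hclose m
        _ = ε := by ring
      have hne12 : s m₁ ≠ s m₂ := by
        intro h
        exact absurd (hg_inj (congrArg Prod.fst h)) (Nat.ne_of_lt hm₂m₁)
      rcases ne_or_eq (s m₁) p with h1 | h1
      · exact ⟨s m₁, ⟨hball (hdist m₁ hm₁ hm₁N), Set.mem_range_self m₁⟩, h1⟩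
      · refine ⟨s m₂, ⟨hball (hdist m₂ hm₂ (hm₁N.trans hm₂m₁)), Set.mem_range_self m₂⟩, ?_⟩
        rw [← h1]; exact hne12.symm
    -- no accumulation points outside T
    have hnotacc : ∀ p, p ∉ T → ¬ AccPt p (𝓟 (Set.range s)) := by
      intro p hp hacc
      have hδ : 0 < Metric.infDist p T := (hT.notMem_iff_infDist_pos ⟨p₀, hp₀⟩).mp hp
      set δ := Metric.infDist p T with hδ_def
      have hF : {m : ℕ | dist (s m) p < δ / 2}.Finite := by
        apply Set.Finite.subset (Set.finite_Iio ⌈2 / δ⌉₊)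
        intro m hm
        simp only [Set.mem_setOf_eq] at hm
        have h1 : δ ≤ Metric.infDist (s m) T + dist p (s m) :=
          Metric.infDist_le_infDist_add_dist
        have h2 : Metric.infDist (s m) T ≤ dist (s m) (t (nn m)) :=
          Metric.infDist_le_dist_of_mem (htT (nn m))
        have h3 : δ / 2 < r m := by
          have := (hclose m)
          rw [dist_comm] at hm
          nlinarith [hm, h1, h2, this]
        have h4 : (m : ℝ) < 2 / δ := by
          have h3' : δ / 2 < 1 / ((m : ℝ) + 1) := h3
          rw [div_lt_div_iff₀ (by positivity) (by positivity)] at h3'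
          rw [lt_div_iff₀ hδ]
          nlinarith
        have := h4.trans_le (Nat.le_ceil _)
        exact_mod_cast Set.mem_Iio.mpr (by exact_mod_cast this)
      set G : Set (X × Y) := (s '' {m : ℕ | dist (s m) p < δ / 2}) \ {p} with hG_def
      have hGfin : G.Finite := (hF.image s).diff
      have hpG : p ∉ G := fun h => h.2 rfl
      have hU : (Metric.ball p (δ / 2) ∩ Gᶜ) ∈ 𝓝 p := by
        apply Filter.inter_mem (Metric.ball_mem_nhds _ (by positivity))
        exact hGfin.isClosed.isOpen_compl.mem_nhds hpG
      obtain ⟨q, ⟨⟨hq1, hq2⟩, ⟨m, rfl⟩⟩, hqp⟩ := accPt_iff_nhds.mp hacc _ hU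
      exact hq2 ⟨Set.mem_image_of_mem s (Metric.mem_ball.mp hq1), hqp⟩
    -- build A and f
    refine ⟨Set.range g, Set.countable_range g,
      fun a => y (Set.mem_range.mp a.2).choose, ?_⟩
    have hgraph : {q : X × Y | ∃ h : q.1 ∈ Set.range g,
        (fun a : Set.range g => y (Set.mem_range.mp a.2).choose) ⟨q.1, h⟩ = q.2}
        = Set.range s := by
      ext q
      constructor
      · rintro ⟨h, hf⟩
        refine ⟨(Set.mem_range.mp h).choose, Prod.ext ?_ ?_⟩
        · exact (Set.mem_range.mp h).choose_spec
        · exact hf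
      · rintro ⟨m, rfl⟩
        have h : g m ∈ Set.range g := ⟨m, rfl⟩
        refine ⟨h, ?_⟩
        have hm' : (Set.mem_range.mp (show (s m).1 ∈ Set.range g from h)).choose = m :=
          hg_inj (Set.mem_range.mp (show (s m).1 ∈ Set.range g from h)).choose_spec
        show y _ = (s m).2
        rw [hm']
    rw [hgraph]
    ext p
    simp only [accumulationPoints, Set.mem_setOf_eq]
    exact ⟨fun h => by_contra fun hp => hnotacc p hp h, fun h => hTacc p h⟩
end

section
/- Let X be a σ-compact metrizable Suslin space with no isolated points, Y a σ-compact but not compact Fréchet space, and f : X → Y any function. Then L_f is closed and there exists a countable set D ⊆ X such that L_f ∩ ({x} × Y) ≠ ∅ for every x ∈ X \ D. -/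
open Filter Topology

/-- The graph of `f : X → Y` as a subset of `X × Y`. -/
def graphSet {X Y : Type*} (f : X → Y) : Set (X × Y) :=
  {p : X × Y | p.2 = f p.1}

/-- In a second-countable space, the set of points of `A` that are not accumulation
points of `A` (i.e. the isolated points of `A`) is countable. -/
lemma countable_isolated_of_secondCountable {X : Type*} [TopologicalSpace X]
    [SecondCountableTopology X] (A : Set X) :
    {x ∈ A | ¬ AccPt x (𝓟 A)}.Countable := by
  set S := {x ∈ A | ¬ AccPt x (𝓟 A)} with hS
  have key : ∀ x ∈ S, ∃ t ∈ TopologicalSpace.countableBasis X,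
      x ∈ t ∧ ∀ y ∈ t ∩ A, y = x := by
    intro x hx
    obtain ⟨hxA, hacc⟩ := hx
    rw [accPt_iff_nhds] at hacc
    push_neg at hacc
    obtain ⟨U, hU, hUniq⟩ := hacc
    obtain ⟨V, hVU, hVopen, hxV⟩ := mem_nhds_iff.mp hU
    obtain ⟨t, htB, hxt, htV⟩ :=
      (TopologicalSpace.isBasis_countableBasis X).exists_subset_of_mem_open hxV hVopen
    exact ⟨t, htB, hxt, fun y hy => hUniq y ⟨hVU (htV hy.1), hy.2⟩⟩
  choose! t ht hxt hun using key
  refine Set.MapsTo.countable_of_injOn (t := TopologicalSpace.countableBasis X)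
    (f := t) (fun x hx => ht x hx) ?_ (TopologicalSpace.countable_countableBasis X)
  intro x hx x' hx' hxx'
  exact (hun x hx x' ⟨hxx' ▸ hxt x' hx', hx'.1⟩).symm

/-- Let `X` be a σ-compact metrizable Suslin space with no isolated points,
`Y` a σ-compact but not compact Fréchet space, and `f : X → Y` any function. Then `L_f` is
closed and there is a countable `D ⊆ X` such that `L_f` meets every vertical line `{x} × Y`
with `x ∉ D`. -/
theorem accumulation_closed_and_sections_nonempty_sigmaCompact
    {X Y : Type*} [TopologicalSpace X] [TopologicalSpace.MetrizableSpace X]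
    [SigmaCompactSpace X]
    (hXs : ∃ (Z : Type) (_ : TopologicalSpace Z) (_ : PolishSpace Z) (g : Z → X),
      Continuous g ∧ Function.Surjective g)
    (hXi : ∀ x : X, Filter.NeBot (𝓝[≠] x))
    [AddCommGroup Y] [Module ℝ Y] [MetricSpace Y]
    [IsTopologicalAddGroup Y] [ContinuousSMul ℝ Y] [LocallyConvexSpace ℝ Y]
    [CompleteSpace Y] [SigmaCompactSpace Y]
    (hYnc : ¬ CompactSpace Y)
    (hinv : ∀ a x y : Y, dist (a + x) (a + y) = dist x y)
    (f : X → Y) :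
    IsClosed (accumulationPoints (graphSet f)) ∧
      ∃ D : Set X, D.Countable ∧
        ∀ x : X, x ∉ D → ∃ y : Y, (x, y) ∈ accumulationPoints (graphSet f) := by
  classical
  letI : MetricSpace X := TopologicalSpace.metrizableSpaceMetric X
  haveI : SecondCountableTopology X := inferInstance
  constructor
  · show IsClosed (derivedSet (graphSet f))
    exact isClosed_derivedSet _
  · set A : ℕ → Set X := fun n => f ⁻¹' (compactCovering Y n) with hA
    refine ⟨⋃ n, {x ∈ A n | ¬ AccPt x (𝓟 (A n))}, ?_, ?_⟩
    · exact Set.countable_iUnion fun n => countable_isolated_of_secondCountable _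
    · intro x hxD
      obtain ⟨n, hxn⟩ : ∃ n, x ∈ A n := by
        have : f x ∈ ⋃ n, compactCovering Y n := by
          rw [iUnion_compactCovering]; trivial
        simpa [hA] using this
      have hacc : AccPt x (𝓟 (A n)) := by
        by_contra h
        exact hxD (Set.mem_iUnion.mpr ⟨n, hxn, h⟩)
      -- extract a sequence in `A n \ {x}` tending to `x`
      have hne : (𝓝[≠] x ⊓ 𝓟 (A n)).NeBot := hacc
      obtain ⟨u, hu⟩ := (𝓝[≠] x ⊓ 𝓟 (A n)).exists_seq_tendsto
      have hux : Filter.Tendsto u Filter.atTop (𝓝 x) :=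
        hu.mono_right ((inf_le_left).trans nhdsWithin_le_nhds)
      have humem : ∀ᶠ k in Filter.atTop, u k ∈ A n ∧ u k ≠ x := by
        have h1 : ∀ᶠ k in Filter.atTop, u k ∈ A n :=
          hu.mono_right inf_le_right (Filter.mem_principal_self _)
        have h2 : ∀ᶠ k in Filter.atTop, u k ∈ ({x}ᶜ : Set X) :=
          hu.mono_right inf_le_left self_mem_nhdsWithin
        filter_upwards [h1, h2] with k hk1 hk2 using ⟨hk1, hk2⟩
      obtain ⟨N, hN⟩ := Filter.eventually_atTop.mp humem
      set v : ℕ → X := fun k => u (k + N) with hv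
      have hvx : Filter.Tendsto v Filter.atTop (𝓝 x) :=
        hux.comp (Filter.tendsto_add_atTop_nat N)
      have hvmem : ∀ k, v k ∈ A n ∧ v k ≠ x := fun k => hN (k + N) (Nat.le_add_left _ _)
      -- values `f (v k)` lie in the compact set `compactCovering Y n`
      obtain ⟨y, hyK, φ, hφ, hfy⟩ :=
        (isCompact_compactCovering Y n).tendsto_subseq (fun k => (hvmem k).1)
      refine ⟨y, ?_⟩
      show AccPt (x, y) (𝓟 (graphSet f))
      rw [accPt_iff_frequently]
      have hp : Filter.Tendsto (fun k => ((v (φ k), f (v (φ k))) : X × Y))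
          Filter.atTop (𝓝 (x, y)) := by
        rw [nhds_prod_eq]
        exact (hvx.comp hφ.tendsto_atTop).prodMk hfy
      refine hp.frequently (Filter.Frequently.of_forall fun k => ⟨?_, rfl⟩)
      intro hcontra
      exact (hvmem (φ k)).2 (congrArg Prod.fst hcontra)
end
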